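/- arXiv:1605.05744 — 2 statements merged into one kernel-verified Lean document; each statement's English description precedes it below -/
import Mathlib

section
/- Let n ≥ 2 and let ℌ⁰_A be the degenerate affine Hecke-Clifford algebra of type A_{n−1} with parameter u = 0. Fix a conjugacy class C of S_n, let J be a subset of the simple transpositions of minimal cardinality with C ∩ W_J ≠ ∅, and let w_C ∈ C ∩ W_J (such an element is elliptic in W_J). Then for every f ∈ ℂ[x_1²,…,x_n²] there exists g ∈ S((V²)^{W_J})^{N_{S_n}(W_J)} such that w_C f − w_C g ∈ [ℌ⁰_A, ℌ⁰_A]. -/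
open scoped BigOperators

namespace DAHCA

/-- Generators of the degenerate affine Hecke-Clifford algebra of type `A_{n-1}`. -/
inductive Gen (n : ℕ) : Type
  | x : Fin n → Gen n
  | c : Fin n → Gen n
  | w : Equiv.Perm (Fin n) → Gen n

noncomputable def X (n : ℕ) (i : Fin n) : FreeAlgebra ℂ (Gen n) := FreeAlgebra.ι ℂ (Gen.x i)
noncomputable def C (n : ℕ) (i : Fin n) : FreeAlgebra ℂ (Gen n) := FreeAlgebra.ι ℂ (Gen.c i)
noncomputable def W (n : ℕ) (σ : Equiv.Perm (Fin n)) : FreeAlgebra ℂ (Gen n) :=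
  FreeAlgebra.ι ℂ (Gen.w σ)

/-- The simple transposition `s_{i+1} = (i, i+1)` (0-indexed). -/
def sA (n : ℕ) (i : ℕ) (h : i + 1 < n) : Equiv.Perm (Fin n) :=
  Equiv.swap ⟨i, Nat.lt_of_succ_lt h⟩ ⟨i + 1, h⟩

/-- The defining relations of the degenerate affine Hecke-Clifford algebra of type
`A_{n-1}` with parameter `u`. -/
inductive Rel (n : ℕ) (u : ℂ) : FreeAlgebra ℂ (Gen n) → FreeAlgebra ℂ (Gen n) → Prop
  | xx (i j : Fin n) : Rel n u (X n i * X n j) (X n j * X n i)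
  | csq (i : Fin n) : Rel n u (C n i * C n i) 1
  | cc (i j : Fin n) (hij : i ≠ j) : Rel n u (C n i * C n j) (-(C n j * C n i))
  | ww (σ τ : Equiv.Perm (Fin n)) : Rel n u (W n σ * W n τ) (W n (σ * τ))
  | wone : Rel n u (W n 1) 1
  | xc (i : Fin n) : Rel n u (X n i * C n i) (-(C n i * X n i))
  | xc' (i j : Fin n) (hij : i ≠ j) : Rel n u (X n i * C n j) (C n j * X n i)
  | wc (σ : Equiv.Perm (Fin n)) (i : Fin n) : Rel n u (W n σ * C n i) (C n (σ i) * W n σ)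
  | cross (i : ℕ) (h : i + 1 < n) :
      Rel n u (X n ⟨i + 1, h⟩ * W n (sA n i h) - W n (sA n i h) * X n ⟨i, Nat.lt_of_succ_lt h⟩)
        (u • (1 - C n ⟨i + 1, h⟩ * C n ⟨i, Nat.lt_of_succ_lt h⟩))
  | xw (i : ℕ) (h : i + 1 < n) (j : Fin n) (h1 : (j : ℕ) ≠ i) (h2 : (j : ℕ) ≠ i + 1) :
      Rel n u (X n j * W n (sA n i h)) (W n (sA n i h) * X n j)

/-- The degenerate affine Hecke-Clifford algebra of type `A_{n-1}` with parameter `u`. -/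
abbrev HA (n : ℕ) (u : ℂ) := RingQuot (Rel n u)

noncomputable def xH (n : ℕ) (u : ℂ) (i : Fin n) : HA n u :=
  RingQuot.mkAlgHom ℂ (Rel n u) (X n i)
noncomputable def cH (n : ℕ) (u : ℂ) (i : Fin n) : HA n u :=
  RingQuot.mkAlgHom ℂ (Rel n u) (C n i)
noncomputable def wH (n : ℕ) (u : ℂ) (σ : Equiv.Perm (Fin n)) : HA n u :=
  RingQuot.mkAlgHom ℂ (Rel n u) (W n σ)

/-- The linear span of all commutators in an algebra `A`; the cocenter is `A` modulo
this subspace. -/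
def commSpan (A : Type*) [Ring A] [Algebra ℂ A] : Submodule ℂ A :=
  Submodule.span ℂ {z : A | ∃ a b : A, z = a * b - b * a}

/-- The ordered product `c_{i_1} c_{i_2} ⋯ c_{i_m}` over `I = {i_1 < i_2 < ⋯ < i_m}`. -/
noncomputable def cProd (n : ℕ) (u : ℂ) (I : Finset (Fin n)) : HA n u :=
  ((I.sort (· ≤ ·)).map (cH n u)).prod

/-- The cycle `(a, a+1, …, b-1)` expressed as the product of the simple transpositions
`s_{a+1} s_{a+2} ⋯ s_{b-1}` (1-indexed), i.e. `(a,a+1)(a+1,a+2)⋯(b-2,b-1)` (0-indexed). -/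
def wSeg (n : ℕ) (a b : ℕ) : Equiv.Perm (Fin n) :=
  ((List.range (b - a - 1)).map fun j =>
    if h : a + j + 1 < n then sA n (a + j) h else 1).prod

end DAHCA
namespace DAHCA

section RelLemmas

variable (n : ℕ) (u : ℂ)

lemma rel_xx (i j : Fin n) : xH n u i * xH n u j = xH n u j * xH n u i := by
  simpa [xH, map_mul] using RingQuot.mkAlgHom_rel ℂ (Rel.xx (n := n) (u := u) i j)

lemma rel_csq (i : Fin n) : cH n u i * cH n u i = 1 := by
  simpa [cH, map_mul] using RingQuot.mkAlgHom_rel ℂ (Rel.csq (n := n) (u := u) i)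

lemma rel_cc (i j : Fin n) (hij : i ≠ j) : cH n u i * cH n u j = -(cH n u j * cH n u i) := by
  simpa [cH, map_mul, map_neg] using RingQuot.mkAlgHom_rel ℂ (Rel.cc (n := n) (u := u) i j hij)

lemma rel_xc (i : Fin n) : xH n u i * cH n u i = -(cH n u i * xH n u i) := by
  simpa [xH, cH, map_mul, map_neg] using RingQuot.mkAlgHom_rel ℂ (Rel.xc (n := n) (u := u) i)

lemma rel_xc' (i j : Fin n) (hij : i ≠ j) : xH n u i * cH n u j = cH n u j * xH n u i := by
  simpa [xH, cH, map_mul] using RingQuot.mkAlgHom_rel ℂ (Rel.xc' (n := n) (u := u) i j hij)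

lemma rel_ww (σ τ : Equiv.Perm (Fin n)) : wH n u σ * wH n u τ = wH n u (σ * τ) := by
  simpa [wH, map_mul] using RingQuot.mkAlgHom_rel ℂ (Rel.ww (n := n) (u := u) σ τ)

lemma rel_wc (σ : Equiv.Perm (Fin n)) (i : Fin n) :
    wH n u σ * cH n u i = cH n u (σ i) * wH n u σ := by
  simpa [wH, cH, map_mul] using RingQuot.mkAlgHom_rel ℂ (Rel.wc (n := n) (u := u) σ i)

lemma rel_cross (i : ℕ) (h : i + 1 < n) :
    xH n u ⟨i + 1, h⟩ * wH n u (sA n i h) - wH n u (sA n i h) * xH n u ⟨i, Nat.lt_of_succ_lt h⟩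
      = u • (1 - cH n u ⟨i + 1, h⟩ * cH n u ⟨i, Nat.lt_of_succ_lt h⟩) := by
  simpa [xH, cH, wH, map_mul, map_sub, map_one, map_smul] using
    RingQuot.mkAlgHom_rel ℂ (Rel.cross (n := n) (u := u) i h)

lemma rel_xw (i : ℕ) (h : i + 1 < n) (j : Fin n) (h1 : (j : ℕ) ≠ i) (h2 : (j : ℕ) ≠ i + 1) :
    xH n u j * wH n u (sA n i h) = wH n u (sA n i h) * xH n u j := by
  simpa [xH, wH, map_mul] using RingQuot.mkAlgHom_rel ℂ (Rel.xw (n := n) (u := u) i h j h1 h2)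

end RelLemmas

/-- The parity automorphism of the superalgebra `HA n u`: it fixes the even generators
`x_i` and `w_σ` and negates the odd generators `c_i`. -/
noncomputable def theta (n : ℕ) (u : ℂ) : HA n u →ₐ[ℂ] HA n u :=
  RingQuot.liftAlgHom ℂ ⟨FreeAlgebra.lift ℂ (fun g => match g with
      | Gen.x i => xH n u i
      | Gen.c i => -(cH n u i)
      | Gen.w σ => wH n u σ), by
    intro a b hab
    induction hab with
    | xx i j => simp [X, FreeAlgebra.lift_ι_apply, rel_xx]
    | csq i =>
        simp only [map_mul, map_one, C, FreeAlgebra.lift_ι_apply]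
        calc -cH n u i * -cH n u i = cH n u i * cH n u i := neg_mul_neg (cH n u i) (cH n u i)
          _ = 1 := rel_csq n u i
    | cc i j hij =>
        simp only [map_mul, map_neg, C, FreeAlgebra.lift_ι_apply]
        calc -cH n u i * -cH n u j = cH n u i * cH n u j := neg_mul_neg (cH n u i) (cH n u j)
          _ = -(cH n u j * cH n u i) := rel_cc n u i j hij
          _ = -(-cH n u j * -cH n u i) := neg_inj.mpr (neg_mul_neg (cH n u j) (cH n u i)).symm
    | ww σ τ => simp [W, FreeAlgebra.lift_ι_apply, rel_ww]
    | wone =>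
        simpa [W, FreeAlgebra.lift_ι_apply, wH, map_one] using
          RingQuot.mkAlgHom_rel ℂ (Rel.wone (n := n) (u := u))
    | xc i =>
        simp only [map_mul, map_neg, X, C, FreeAlgebra.lift_ι_apply]
        calc xH n u i * -cH n u i = -(xH n u i * cH n u i) := mul_neg (xH n u i) (cH n u i)
          _ = -(-(cH n u i * xH n u i)) := neg_inj.mpr (rel_xc n u i)
          _ = -(-cH n u i * xH n u i) := neg_inj.mpr (neg_mul (cH n u i) (xH n u i)).symm
    | xc' i j hij =>
        simp only [map_mul, map_neg, X, C, FreeAlgebra.lift_ι_apply]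
        calc xH n u i * -cH n u j = -(xH n u i * cH n u j) := mul_neg (xH n u i) (cH n u j)
          _ = -(cH n u j * xH n u i) := neg_inj.mpr (rel_xc' n u i j hij)
          _ = -cH n u j * xH n u i := (neg_mul (cH n u j) (xH n u i)).symm
    | wc σ i =>
        simp only [map_mul, map_neg, W, C, FreeAlgebra.lift_ι_apply]
        calc wH n u σ * -cH n u i = -(wH n u σ * cH n u i) := mul_neg (wH n u σ) (cH n u i)
          _ = -(cH n u (σ i) * wH n u σ) := neg_inj.mpr (rel_wc n u σ i)
          _ = -cH n u (σ i) * wH n u σ := (neg_mul (cH n u (σ i)) (wH n u σ)).symm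
    | cross i h =>
        simp only [map_sub, map_mul, map_smul, map_one, map_neg, X, C, W,
          FreeAlgebra.lift_ι_apply]
        exact (rel_cross n u i h).trans
          (congrArg (fun t => u • ((1 : HA n u) - t))
            (neg_mul_neg (cH n u ⟨i + 1, h⟩) (cH n u ⟨i, Nat.lt_of_succ_lt h⟩)).symm)
    | xw i h j h1 h2 => simp [X, W, FreeAlgebra.lift_ι_apply, rel_xw n u i h j h1 h2]⟩

/-- The even part of the superalgebra `HA n u`, i.e. the fixed subspace of the parity
automorphism. -/
noncomputable def evenPart (n : ℕ) (u : ℂ) : Submodule ℂ (HA n u) :=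
  LinearMap.eqLocus (theta n u).toLinearMap LinearMap.id

/-- The even cocenter of `HA n u`: the image of the even part in the quotient of
`HA n u` by the span of all commutators. -/
noncomputable def evenCocenter (n : ℕ) (u : ℂ) :
    Submodule ℂ (HA n u ⧸ commSpan (HA n u)) :=
  (evenPart n u).map (commSpan (HA n u)).mkQ

end DAHCA
namespace DAHCA

/-- The (commutative) subalgebra of `HA n u` generated by `x_1, …, x_n`. -/
noncomputable def Xalg (n : ℕ) (u : ℂ) : Subalgebra ℂ (HA n u) :=
  Algebra.adjoin ℂ (Set.range (xH n u))

noncomputable instance (n : ℕ) (u : ℂ) : CommRing (Xalg n u) :=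
  { (Xalg n u).toRing with
    mul_comm := (Algebra.isMulCommutative_adjoin ℂ (by
      rintro a ⟨i, rfl⟩ b ⟨j, rfl⟩
      exact rel_xx n u i j)).is_comm.comm }

noncomputable def xSub (n : ℕ) (u : ℂ) (i : Fin n) : Xalg n u :=
  ⟨xH n u i, Algebra.subset_adjoin ⟨i, rfl⟩⟩

/-- Evaluation of a polynomial at the commuting elements `x_1, …, x_n` of `HA n u`. -/
noncomputable def evP (n : ℕ) (u : ℂ) (p : MvPolynomial (Fin n) ℂ) : HA n u :=
  ((MvPolynomial.aeval (xSub n u) p : Xalg n u) : HA n u)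

/-- The polynomials fixed by (the permutation action of) every element of `G`. -/
noncomputable def permFixed (n : ℕ) (G : Set (Equiv.Perm (Fin n))) :
    Submodule ℂ (MvPolynomial (Fin n) ℂ) where
  carrier := {p | ∀ σ ∈ G, MvPolynomial.rename (⇑σ) p = p}
  add_mem' := fun ha hb σ hσ => by rw [map_add, ha σ hσ, hb σ hσ]
  zero_mem' := fun σ hσ => map_zero _
  smul_mem' := fun c p hp σ hσ => by
    rw [map_smul, hp σ hσ]

/-- `V²`: the span of the squares of the variables. -/
noncomputable def V2 (n : ℕ) : Submodule ℂ (MvPolynomial (Fin n) ℂ) :=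
  Submodule.span ℂ (Set.range fun i : Fin n => (MvPolynomial.X i) ^ 2)

/-- `(V²)^{W_J}`, the `W_J`-fixed subspace of `V²`. -/
noncomputable def V2J (n : ℕ) (J : Set (Equiv.Perm (Fin n))) : Submodule ℂ (MvPolynomial (Fin n) ℂ) :=
  V2 n ⊓ permFixed n (Subgroup.closure J : Subgroup (Equiv.Perm (Fin n)))

/-- `S((V²)^{W_J})`, the subalgebra generated by the `W_J`-fixed subspace of `V²`. -/
noncomputable def SV2J (n : ℕ) (J : Set (Equiv.Perm (Fin n))) :
    Subalgebra ℂ (MvPolynomial (Fin n) ℂ) :=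
  Algebra.adjoin ℂ (V2J n J : Set (MvPolynomial (Fin n) ℂ))

/-- `S((V²)^{W_J})^{N_{S_n}(W_J)}`: the subspace of `S((V²)^{W_J})` consisting of elements
fixed by the normalizer of `W_J` in `S_n`. -/
noncomputable def SInvJ (n : ℕ) (J : Set (Equiv.Perm (Fin n))) :
    Submodule ℂ (MvPolynomial (Fin n) ℂ) :=
  Subalgebra.toSubmodule (SV2J n J) ⊓
    permFixed n (Subgroup.normalizer ((Subgroup.closure J : Subgroup (Equiv.Perm (Fin n))) : Set (Equiv.Perm (Fin n))) : Subgroup (Equiv.Perm (Fin n)))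

/-- The set of simple transpositions of `S_n`. -/
def simplesA (n : ℕ) : Set (Equiv.Perm (Fin n)) :=
  {σ | ∃ (i : ℕ) (h : i + 1 < n), σ = sA n i h}

end DAHCA
namespace DAHCA

section Aux
open Equiv MvPolynomial

variable {n : ℕ}

lemma wH_one : wH n 0 1 = 1 := by
  simpa [wH, map_one] using RingQuot.mkAlgHom_rel ℂ (Rel.wone (n := n) (u := 0))

lemma wH_mul (σ τ : Equiv.Perm (Fin n)) : wH n 0 σ * wH n 0 τ = wH n 0 (σ * τ) :=
  rel_ww n 0 σ τ

lemma wH_mul_inv (σ : Equiv.Perm (Fin n)) : wH n 0 σ * wH n 0 σ⁻¹ = 1 := by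
  rw [wH_mul, mul_inv_cancel, wH_one]

lemma wH_inv_mul (σ : Equiv.Perm (Fin n)) : wH n 0 σ⁻¹ * wH n 0 σ = 1 := by
  rw [wH_mul, inv_mul_cancel, wH_one]

/-- The key relation at `u = 0`: `s_i x_j = x_{s_i j} s_i` for adjacent transpositions. -/
lemma wx_adj (i : ℕ) (h : i + 1 < n) (j : Fin n) :
    wH n 0 (sA n i h) * xH n 0 j = xH n 0 (sA n i h j) * wH n 0 (sA n i h) := by
  have hcross := rel_cross n 0 i h
  rw [zero_smul, sub_eq_zero] at hcross
  -- `hcross : xH ⟨i+1⟩ * s = s * xH ⟨i⟩`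
  have hss : wH n 0 (sA n i h) * wH n 0 (sA n i h) = 1 := by
    rw [wH_mul, sA, Equiv.swap_mul_self, wH_one]
  by_cases h1 : (j : ℕ) = i
  · have hj : j = ⟨i, Nat.lt_of_succ_lt h⟩ := Fin.ext h1
    subst hj
    have happ : sA n i h ⟨i, Nat.lt_of_succ_lt h⟩ = ⟨i + 1, h⟩ := Equiv.swap_apply_left _ _
    rw [happ, ← hcross]
  · by_cases h2 : (j : ℕ) = i + 1
    · have hj : j = ⟨i + 1, h⟩ := Fin.ext h2
      subst hj
      have happ : sA n i h ⟨i + 1, h⟩ = ⟨i, Nat.lt_of_succ_lt h⟩ := Equiv.swap_apply_right _ _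
      rw [happ]
      -- from hcross : x_{i+1} s = s x_i, get s x_{i+1} = x_i s
      have e1 : wH n 0 (sA n i h) * (xH n 0 ⟨i + 1, h⟩ * wH n 0 (sA n i h)) =
          xH n 0 ⟨i, Nat.lt_of_succ_lt h⟩ := by
        rw [hcross, ← mul_assoc, hss, one_mul]
      calc wH n 0 (sA n i h) * xH n 0 ⟨i + 1, h⟩
          = wH n 0 (sA n i h) * (xH n 0 ⟨i + 1, h⟩ * (wH n 0 (sA n i h) * wH n 0 (sA n i h))) := by
            rw [hss, mul_one]
        _ = (wH n 0 (sA n i h) * (xH n 0 ⟨i + 1, h⟩ * wH n 0 (sA n i h))) * wH n 0 (sA n i h) := by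
            noncomm_ring
        _ = xH n 0 ⟨i, Nat.lt_of_succ_lt h⟩ * wH n 0 (sA n i h) := by rw [e1]
    · have happ : sA n i h j = j := by
        apply Equiv.swap_apply_of_ne_of_ne
        · exact fun hc => h1 (by rw [hc])
        · exact fun hc => h2 (by rw [hc])
      rw [happ, ← rel_xw n 0 i h j h1 h2]

lemma wx_swap_nat : ∀ (d a b : ℕ) (hab : a < b) (hd : b - a ≤ d) (hb : b < n) (j : Fin n),
    wH n 0 (Equiv.swap ⟨a, lt_trans hab hb⟩ ⟨b, hb⟩) * xH n 0 j
      = xH n 0 (Equiv.swap ⟨a, lt_trans hab hb⟩ ⟨b, hb⟩ j) *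
          wH n 0 (Equiv.swap ⟨a, lt_trans hab hb⟩ ⟨b, hb⟩) := by
  intro d
  induction d with
  | zero => intro a b hab hd hb j; omega
  | succ d ih =>
    intro a b hab hd hb j
    by_cases hb1 : b = a + 1
    · subst hb1
      have : Equiv.swap (⟨a, lt_trans hab hb⟩ : Fin n) ⟨a + 1, hb⟩ = sA n a hb := rfl
      rw [this]
      exact wx_adj a hb j
    · -- b ≥ a + 2
      have hb' : (b - 1) + 1 < n := by omega
      have hab' : a < b - 1 := by omega
      set s := sA n (b - 1) hb' with hs
      have hsb : s ⟨b - 1, Nat.lt_of_succ_lt hb'⟩ = ⟨b, hb⟩ := by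
        have := Equiv.swap_apply_left (⟨b - 1, Nat.lt_of_succ_lt hb'⟩ : Fin n) ⟨b - 1 + 1, hb'⟩
        rw [hs, sA, this]
        exact Fin.ext (by simp; omega)
      have hsa : s ⟨a, lt_trans hab hb⟩ = ⟨a, lt_trans hab hb⟩ := by
        apply Equiv.swap_apply_of_ne_of_ne <;>
          exact fun hc => by have := congrArg Fin.val hc; simp at this; omega
      have hkey : Equiv.swap (⟨a, lt_trans hab hb⟩ : Fin n) ⟨b, hb⟩ =
          s * Equiv.swap ⟨a, lt_trans hab' (Nat.lt_of_succ_lt hb')⟩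
            ⟨b - 1, Nat.lt_of_succ_lt hb'⟩ * s⁻¹ := by
        rw [← Equiv.swap_apply_apply s]
        congr 1
        · exact hsa.symm
        · exact hsb.symm
      have ihb := ih a (b - 1) hab' (by omega) (Nat.lt_of_succ_lt hb')
      have hsinv : s⁻¹ = s := by rw [hs, sA, Equiv.swap_inv]
      rw [hkey, hsinv]
      -- now expand wH of the triple product
      have e : ∀ (σ τ π : Equiv.Perm (Fin n)),
          (∀ j, wH n 0 σ * xH n 0 j = xH n 0 (σ j) * wH n 0 σ) →
          (∀ j, wH n 0 τ * xH n 0 j = xH n 0 (τ j) * wH n 0 τ) →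
          (∀ j, wH n 0 π * xH n 0 j = xH n 0 (π j) * wH n 0 π) →
          ∀ j, wH n 0 (σ * τ * π) * xH n 0 j = xH n 0 ((σ * τ * π) j) * wH n 0 (σ * τ * π) := by
        intro σ τ π hσ hτ hπ j
        rw [← wH_mul, ← wH_mul]
        calc wH n 0 σ * wH n 0 τ * wH n 0 π * xH n 0 j
            = wH n 0 σ * (wH n 0 τ * (wH n 0 π * xH n 0 j)) := by noncomm_ring
          _ = wH n 0 σ * (wH n 0 τ * (xH n 0 (π j) * wH n 0 π)) := by rw [hπ]
          _ = wH n 0 σ * ((wH n 0 τ * xH n 0 (π j)) * wH n 0 π) := by noncomm_ring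
          _ = wH n 0 σ * ((xH n 0 (τ (π j)) * wH n 0 τ) * wH n 0 π) := by rw [hτ]
          _ = (wH n 0 σ * xH n 0 (τ (π j))) * (wH n 0 τ * wH n 0 π) := by noncomm_ring
          _ = (xH n 0 (σ (τ (π j))) * wH n 0 σ) * (wH n 0 τ * wH n 0 π) := by rw [hσ]
          _ = xH n 0 (σ (τ (π j))) * (wH n 0 σ * wH n 0 τ * wH n 0 π) := by noncomm_ring
          _ = xH n 0 ((σ * τ * π) j) * (wH n 0 σ * wH n 0 τ * wH n 0 π) := by
              simp [Equiv.Perm.mul_apply]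
      refine e s _ s (fun j => wx_adj (b-1) hb' j) ihb (fun j => wx_adj (b-1) hb' j) j

lemma wx_swap (x y : Fin n) (hxy : x ≠ y) (j : Fin n) :
    wH n 0 (Equiv.swap x y) * xH n 0 j = xH n 0 (Equiv.swap x y j) * wH n 0 (Equiv.swap x y) := by
  rcases lt_trichotomy (x : ℕ) (y : ℕ) with hlt | heq | hgt
  · have := wx_swap_nat (n := n) n x y hlt (by omega) y.isLt j
    simpa [Fin.eta] using this
  · exact absurd (Fin.ext heq) hxy
  · have := wx_swap_nat (n := n) n y x hgt (by omega) x.isLt j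
    rw [Equiv.swap_comm]
    simpa [Fin.eta] using this

lemma wx (σ : Equiv.Perm (Fin n)) : ∀ (j : Fin n),
    wH n 0 σ * xH n 0 j = xH n 0 (σ j) * wH n 0 σ := by
  refine Equiv.Perm.swap_induction_on σ ?_ ?_
  · intro j; simp [wH_one]
  · intro f x y hxy ih j
    rw [← wH_mul]
    calc wH n 0 (Equiv.swap x y) * wH n 0 f * xH n 0 j
        = wH n 0 (Equiv.swap x y) * (wH n 0 f * xH n 0 j) := by noncomm_ring
      _ = wH n 0 (Equiv.swap x y) * (xH n 0 (f j) * wH n 0 f) := by rw [ih j]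
      _ = (wH n 0 (Equiv.swap x y) * xH n 0 (f j)) * wH n 0 f := by noncomm_ring
      _ = (xH n 0 (Equiv.swap x y (f j)) * wH n 0 (Equiv.swap x y)) * wH n 0 f := by
          rw [wx_swap x y hxy]
      _ = xH n 0 ((Equiv.swap x y * f) j) * (wH n 0 (Equiv.swap x y) * wH n 0 f) := by
          simp [Equiv.Perm.mul_apply, mul_assoc]

end Aux

section EvP
open Equiv MvPolynomial

variable {n : ℕ}

lemma evP_add (p q : MvPolynomial (Fin n) ℂ) : evP n 0 (p + q) = evP n 0 p + evP n 0 q := by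
  simp [evP, map_add]

lemma evP_sub (p q : MvPolynomial (Fin n) ℂ) : evP n 0 (p - q) = evP n 0 p - evP n 0 q := by
  simp [evP, map_sub]

lemma evP_zero : evP n 0 (0 : MvPolynomial (Fin n) ℂ) = 0 := by simp [evP]

lemma evP_smul (c : ℂ) (p : MvPolynomial (Fin n) ℂ) : evP n 0 (c • p) = c • evP n 0 p := by
  simp [evP, map_smul]

lemma evP_mul (p q : MvPolynomial (Fin n) ℂ) : evP n 0 (p * q) = evP n 0 p * evP n 0 q := by
  simp [evP, map_mul]

lemma evP_X (i : Fin n) : evP n 0 (MvPolynomial.X i) = xH n 0 i := by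
  simp [evP, xSub]

lemma evP_C (a : ℂ) : evP n 0 (MvPolynomial.C a) = algebraMap ℂ (HA n 0) a := by
  simp only [evP, aeval_C]
  rfl

lemma evP_comm_evP (p q : MvPolynomial (Fin n) ℂ) :
    evP n 0 p * evP n 0 q = evP n 0 q * evP n 0 p := by
  rw [← evP_mul, ← evP_mul, mul_comm]

lemma wx_evP (σ : Equiv.Perm (Fin n)) (p : MvPolynomial (Fin n) ℂ) :
    wH n 0 σ * evP n 0 p = evP n 0 (rename σ p) * wH n 0 σ := by
  induction p using MvPolynomial.induction_on with
  | C a => rw [rename_C, evP_C, Algebra.commutes]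
  | add p q ihp ihq => rw [map_add, evP_add, evP_add, mul_add, add_mul, ihp, ihq]
  | mul_X p i ih =>
    rw [map_mul, rename_X, evP_mul, evP_mul, evP_X, evP_X]
    calc wH n 0 σ * (evP n 0 p * xH n 0 i)
        = (wH n 0 σ * evP n 0 p) * xH n 0 i := by noncomm_ring
      _ = evP n 0 (rename (⇑σ) p) * (wH n 0 σ * xH n 0 i) := by rw [ih]; noncomm_ring
      _ = evP n 0 (rename (⇑σ) p) * (xH n 0 (σ i) * wH n 0 σ) := by rw [wx]
      _ = evP n 0 (rename (⇑σ) p) * xH n 0 (σ i) * wH n 0 σ := by noncomm_ring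

lemma conj_wH_evP (σ τ : Equiv.Perm (Fin n)) (p : MvPolynomial (Fin n) ℂ) :
    wH n 0 σ * (wH n 0 τ * evP n 0 p) * wH n 0 σ⁻¹ =
      wH n 0 (σ * τ * σ⁻¹) * evP n 0 (rename σ p) := by
  calc wH n 0 σ * (wH n 0 τ * evP n 0 p) * wH n 0 σ⁻¹
      = (wH n 0 σ * wH n 0 τ) * (evP n 0 p * wH n 0 σ⁻¹) := by noncomm_ring
    _ = wH n 0 (σ * τ) * (evP n 0 p * wH n 0 σ⁻¹) := by rw [wH_mul]
    _ = wH n 0 (σ * τ) * (wH n 0 σ⁻¹ * evP n 0 (rename (⇑σ⁻¹⁻¹) p)) := by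
        rw [wx_evP σ⁻¹ (rename (⇑σ⁻¹⁻¹) p), rename_rename]
        congr 2
        have : (⇑σ⁻¹ ∘ ⇑σ⁻¹⁻¹) = id := by
          funext z; simp
        rw [this, rename_id, AlgHom.id_apply]
    _ = wH n 0 (σ * τ * σ⁻¹) * evP n 0 (rename (⇑σ) p) := by
        rw [← wH_mul (σ * τ) σ⁻¹]
        simp only [inv_inv]
        noncomm_ring

end EvP

section Comm
open Equiv MvPolynomial

variable {n : ℕ}

lemma mem_commSpan (a b : HA n 0) : a * b - b * a ∈ commSpan (HA n 0) :=
  Submodule.subset_span ⟨a, b, rfl⟩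

lemma conj_mem_commSpan (a u u' : HA n 0) (h : u' * u = 1) :
    a - u * a * u' ∈ commSpan (HA n 0) := by
  have : a - u * a * u' = u' * (u * a) - (u * a) * u' := by
    rw [← mul_assoc, h, one_mul]
  rw [this]
  exact mem_commSpan u' (u * a)

/-- The submodule of polynomials `p` with `w_C ⋅ p ≡ 0` modulo commutators. -/
noncomputable def Kmod (wC : Equiv.Perm (Fin n)) : Submodule ℂ (MvPolynomial (Fin n) ℂ) where
  carrier := {p | wH n 0 wC * evP n 0 p ∈ commSpan (HA n 0)}
  add_mem' := by
    intro a b ha hb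
    simp only [Set.mem_setOf_eq, evP_add, mul_add] at *
    exact add_mem ha hb
  zero_mem' := by
    simp only [Set.mem_setOf_eq, evP_zero, mul_zero]
    exact zero_mem _
  smul_mem' := by
    intro c p hp
    simp only [Set.mem_setOf_eq, evP_smul, mul_smul_comm] at *
    exact Submodule.smul_mem _ c hp

lemma mem_Kmod_iff (wC : Equiv.Perm (Fin n)) (p : MvPolynomial (Fin n) ℂ) :
    p ∈ Kmod wC ↔ wH n 0 wC * evP n 0 p ∈ commSpan (HA n 0) := Iff.rfl

lemma key_step (wC : Equiv.Perm (Fin n)) (j : Fin n) (q : MvPolynomial (Fin n) ℂ) :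
    (MvPolynomial.X j - MvPolynomial.X (wC j)) * q ∈ Kmod wC := by
  rw [mem_Kmod_iff, sub_mul, evP_sub, mul_sub]
  have e1 : wH n 0 wC * evP n 0 (MvPolynomial.X j * q) =
      xH n 0 (wC j) * (wH n 0 wC * evP n 0 q) := by
    rw [evP_mul, evP_X]
    calc wH n 0 wC * (xH n 0 j * evP n 0 q)
        = (wH n 0 wC * xH n 0 j) * evP n 0 q := by noncomm_ring
      _ = (xH n 0 (wC j) * wH n 0 wC) * evP n 0 q := by rw [wx]
      _ = xH n 0 (wC j) * (wH n 0 wC * evP n 0 q) := by noncomm_ring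
  have e2 : wH n 0 wC * evP n 0 (MvPolynomial.X (wC j) * q) =
      (wH n 0 wC * evP n 0 q) * xH n 0 (wC j) := by
    rw [evP_mul, evP_X, ← evP_X (wC j), evP_comm_evP, evP_X]
    noncomm_ring
  rw [e1, e2]
  exact mem_commSpan _ _

/-- The ideal generated by `x_j - x_{w_C(j)}`. -/
noncomputable def Iw (wC : Equiv.Perm (Fin n)) : Ideal (MvPolynomial (Fin n) ℂ) :=
  Ideal.span {p | ∃ j, p = MvPolynomial.X j - MvPolynomial.X (wC j)}

lemma Iw_le_Kmod (wC : Equiv.Perm (Fin n)) : ∀ p ∈ Iw wC, p ∈ Kmod wC := by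
  intro p hp
  have main : ∀ q, q * p ∈ Kmod wC := by
    refine Submodule.span_induction ?_ ?_ ?_ ?_ hp
    · rintro x ⟨j, rfl⟩ q
      rw [mul_comm]
      exact key_step wC j q
    · intro q; rw [mul_zero]; exact zero_mem _
    · intro a b _ _ ha hb q
      rw [mul_add]; exact add_mem (ha q) (hb q)
    · intro r x _ hx q
      rw [smul_eq_mul, ← mul_assoc]
      exact hx (q * r)
  simpa using main 1

lemma Iw_X_sub_pow (wC : Equiv.Perm (Fin n)) (j : Fin n) (t : ℕ) :
    MvPolynomial.X j - MvPolynomial.X ((wC ^ t) j) ∈ Iw wC := by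
  induction t with
  | zero => simp
  | succ t ih =>
    have hgen : MvPolynomial.X ((wC ^ t) j) - MvPolynomial.X (wC ((wC ^ t) j)) ∈ Iw wC :=
      Ideal.subset_span ⟨(wC ^ t) j, rfl⟩
    have : (wC ^ (t + 1)) j = wC ((wC ^ t) j) := by
      rw [pow_succ']
      rfl
    rw [this]
    have := add_mem ih hgen
    simpa using this

lemma Iw_sameCycle (wC : Equiv.Perm (Fin n)) {x y : Fin n} (h : wC.SameCycle x y) :
    MvPolynomial.X x - MvPolynomial.X y ∈ Iw wC := by
  obtain ⟨t, _, rfl⟩ := h.exists_pow_eq'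
  exact Iw_X_sub_pow wC x t

end Comm

section Orb
open Equiv MvPolynomial

variable {n : ℕ}

/-- The `w_C`-orbit of `x` as a `Finset`. -/
def orbF (wC : Equiv.Perm (Fin n)) (x : Fin n) : Finset (Fin n) :=
  Finset.univ.filter (wC.SameCycle x ·)

lemma mem_orbF {wC : Equiv.Perm (Fin n)} {x y : Fin n} :
    y ∈ orbF wC x ↔ wC.SameCycle x y := by simp [orbF]

lemma self_mem_orbF (wC : Equiv.Perm (Fin n)) (x : Fin n) : x ∈ orbF wC x :=
  mem_orbF.mpr (Equiv.Perm.SameCycle.refl wC x)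

lemma orbF_eq_of_sameCycle {wC : Equiv.Perm (Fin n)} {x y : Fin n}
    (h : wC.SameCycle x y) : orbF wC x = orbF wC y := by
  ext z
  simp only [mem_orbF]
  exact ⟨fun hz => h.symm.trans hz, fun hz => h.trans hz⟩

/-- The sum of squares over the `w_C`-orbit of `x`. -/
noncomputable def pB (wC : Equiv.Perm (Fin n)) (x : Fin n) : MvPolynomial (Fin n) ℂ :=
  ∑ y ∈ orbF wC x, MvPolynomial.X y ^ 2

/-- The subalgebra generated by the orbit sums of squares. -/
noncomputable def P0 (wC : Equiv.Perm (Fin n)) : Subalgebra ℂ (MvPolynomial (Fin n) ℂ) :=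
  Algebra.adjoin ℂ (Set.range (pB wC))

lemma collapse (wC : Equiv.Perm (Fin n)) {f : MvPolynomial (Fin n) ℂ}
    (hf : f ∈ Algebra.adjoin ℂ (Set.range fun i : Fin n => (MvPolynomial.X i) ^ 2)) :
    ∃ g ∈ P0 wC, f - g ∈ Iw wC := by
  refine Algebra.adjoin_induction ?_ ?_ ?_ ?_ hf
  · rintro x ⟨i, rfl⟩
    refine ⟨((orbF wC i).card : ℂ)⁻¹ • pB wC i,
      Subalgebra.smul_mem _ (Algebra.subset_adjoin (Set.mem_range_self i)) _, ?_⟩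
    have hc : ((orbF wC i).card : ℂ) ≠ 0 :=
      Nat.cast_ne_zero.mpr (Finset.card_ne_zero_of_mem (self_mem_orbF wC i))
    have hsum : pB wC i - ((orbF wC i).card : ℂ) • MvPolynomial.X i ^ 2
        = ∑ y ∈ orbF wC i, (MvPolynomial.X y ^ 2 - MvPolynomial.X i ^ 2) := by
      rw [Finset.sum_sub_distrib, Finset.sum_const, pB]
      congr 1
      rw [Nat.cast_smul_eq_nsmul]
    have hmem : pB wC i - ((orbF wC i).card : ℂ) • MvPolynomial.X i ^ 2 ∈ Iw wC := by
      rw [hsum]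
      refine Submodule.sum_mem _ ?_
      intro y hy
      have hsc : wC.SameCycle y i := (mem_orbF.mp hy).symm
      have h1 : MvPolynomial.X y - MvPolynomial.X i ∈ Iw wC := Iw_sameCycle wC hsc
      have hid : (MvPolynomial.X y ^ 2 - MvPolynomial.X i ^ 2 : MvPolynomial (Fin n) ℂ)
          = (MvPolynomial.X y + MvPolynomial.X i) * (MvPolynomial.X y - MvPolynomial.X i) := by
        ring
      rw [hid]
      exact Ideal.mul_mem_left (Iw wC) (MvPolynomial.X y + MvPolynomial.X i) h1
    have heq : MvPolynomial.X i ^ 2 - ((orbF wC i).card : ℂ)⁻¹ • pB wC i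
        = (-(((orbF wC i).card : ℂ)⁻¹)) •
            (pB wC i - ((orbF wC i).card : ℂ) • MvPolynomial.X i ^ 2) := by
      rw [neg_smul, smul_sub, smul_smul, inv_mul_cancel₀ hc, one_smul, neg_sub]
    rw [heq, Algebra.smul_def]
    exact Ideal.mul_mem_left _ _ hmem
  · intro r
    exact ⟨algebraMap ℂ _ r, Subalgebra.algebraMap_mem _ r, by rw [sub_self]; exact zero_mem _⟩
  · rintro p q _ _ ⟨g1, hg1, hd1⟩ ⟨g2, hg2, hd2⟩
    refine ⟨g1 + g2, add_mem hg1 hg2, ?_⟩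
    have : p + q - (g1 + g2) = (p - g1) + (q - g2) := by ring
    rw [this]
    exact add_mem hd1 hd2
  · rintro p q _ _ ⟨g1, hg1, hd1⟩ ⟨g2, hg2, hd2⟩
    refine ⟨g1 * g2, mul_mem hg1 hg2, ?_⟩
    have : p * q - g1 * g2 = p * (q - g2) + (p - g1) * g2 := by ring
    rw [this]
    exact add_mem (Ideal.mul_mem_left _ _ hd2) (Ideal.mul_mem_right _ _ hd1)

lemma rename_pB_of_image {wC : Equiv.Perm (Fin n)} (σ : Equiv.Perm (Fin n)) (x : Fin n)
    (him : (orbF wC x).image ⇑σ = orbF wC (σ x)) :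
    rename ⇑σ (pB wC x) = pB wC (σ x) := by
  rw [pB, map_sum]
  simp_rw [map_pow, rename_X]
  rw [pB, ← him, Finset.sum_image (fun a _ b _ h => σ.injective h)]

lemma rename_fix_P0 {wC : Equiv.Perm (Fin n)} (τ : Equiv.Perm (Fin n))
    (hτ : ∀ x, rename ⇑τ (pB wC x) = pB wC x) :
    ∀ p ∈ P0 wC, rename ⇑τ p = p := by
  intro p hp
  refine Algebra.adjoin_induction ?_ ?_ ?_ ?_ hp
  · rintro q ⟨x, rfl⟩; exact hτ x
  · intro r; simp
  · intro a b _ _ ha hb; rw [map_add, ha, hb]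
  · intro a b _ _ ha hb; rw [map_mul, ha, hb]

lemma rename_mem_P0 {wC : Equiv.Perm (Fin n)} (σ : Equiv.Perm (Fin n))
    (hσ : ∀ x, rename ⇑σ (pB wC x) = pB wC (σ x)) :
    ∀ p ∈ P0 wC, rename ⇑σ p ∈ P0 wC := by
  intro p hp
  refine Algebra.adjoin_induction ?_ ?_ ?_ ?_ hp
  · rintro q ⟨x, rfl⟩; rw [hσ x]; exact Algebra.subset_adjoin ⟨σ x, rfl⟩
  · intro r
    have hr : (rename ⇑σ) (algebraMap ℂ (MvPolynomial (Fin n) ℂ) r) = algebraMap ℂ _ r :=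
      (rename ⇑σ).commutes r
    rw [hr]; exact Subalgebra.algebraMap_mem _ r
  · intro a b _ _ ha hb; rw [map_add]; exact add_mem ha hb
  · intro a b _ _ ha hb; rw [map_mul]; exact mul_mem ha hb

end Orb

section Combinatorics
open Equiv MvPolynomial Finset

variable {n : ℕ}

open Classical in
noncomputable def FW (J : Set (Equiv.Perm (Fin n))) : Fin n → ℕ := fun x =>
  ((Finset.range (x : ℕ)).filter (fun i => ¬ ∃ h : i + 1 < n, sA n i h ∈ J)).card

lemma FW_mono (J : Set (Equiv.Perm (Fin n))) : Monotone (FW J) := by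
  classical
  intro x y hxy
  unfold FW
  exact Finset.card_le_card
    (Finset.filter_subset_filter _ (Finset.range_subset_range.mpr hxy))

lemma FW_succ_mem (J : Set (Equiv.Perm (Fin n))) (i : ℕ) (h : i + 1 < n)
    (hi : ∃ h' : i + 1 < n, sA n i h' ∈ J) :
    FW J ⟨i + 1, h⟩ = FW J ⟨i, Nat.lt_of_succ_lt h⟩ := by
  classical
  unfold FW
  simp only [Finset.range_add_one, Finset.filter_insert]
  rw [if_neg (by simpa using hi)]

lemma FW_succ_not (J : Set (Equiv.Perm (Fin n))) (i : ℕ) (h : i + 1 < n)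
    (hi : ¬ ∃ h' : i + 1 < n, sA n i h' ∈ J) :
    FW J ⟨i + 1, h⟩ = FW J ⟨i, Nat.lt_of_succ_lt h⟩ + 1 := by
  classical
  unfold FW
  simp only [Finset.range_add_one, Finset.filter_insert]
  rw [if_pos (by simpa using hi), Finset.card_insert_of_notMem (by simp)]

lemma FW_swap (J : Set (Equiv.Perm (Fin n))) (i : ℕ) (h : i + 1 < n)
    (hmem : sA n i h ∈ J) (x : Fin n) : FW J (sA n i h x) = FW J x := by
  by_cases h1 : (x : ℕ) = i
  · have hx : x = ⟨i, Nat.lt_of_succ_lt h⟩ := Fin.ext h1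
    subst hx
    rw [sA, Equiv.swap_apply_left]
    exact FW_succ_mem J i h ⟨h, hmem⟩
  · by_cases h2 : (x : ℕ) = i + 1
    · have hx : x = ⟨i + 1, h⟩ := Fin.ext h2
      subst hx
      rw [sA, Equiv.swap_apply_right]
      exact (FW_succ_mem J i h ⟨h, hmem⟩).symm
    · rw [sA, Equiv.swap_apply_of_ne_of_ne
        (fun hc => h1 (by rw [hc])) (fun hc => h2 (by rw [hc]))]

lemma FW_W (J : Set (Equiv.Perm (Fin n))) (hJ : J ⊆ simplesA n) :
    ∀ σ ∈ Subgroup.closure J, ∀ x, FW J (σ x) = FW J x := by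
  intro σ hσ
  refine Subgroup.closure_induction ?_ ?_ ?_ ?_ hσ
  · intro s hs x
    obtain ⟨i, h, rfl⟩ := hJ hs
    exact FW_swap J i h hs x
  · intro x; rfl
  · intro a b _ _ ha hb x
    rw [Equiv.Perm.mul_apply, ha, hb]
  · intro a _ ha x
    conv_rhs => rw [← Equiv.apply_symm_apply a x]
    rw [← ha (a⁻¹ x)]
    rfl

/-- The set of simple transpositions selected by a predicate on indices. -/
def edgeSet (n : ℕ) (Q : ℕ → Prop) : Set (Equiv.Perm (Fin n)) :=
  {σ | ∃ i, Q i ∧ ∃ h : i + 1 < n, σ = sA n i h}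

lemma sA_index_inj {i i' : ℕ} {h : i + 1 < n} {h' : i' + 1 < n}
    (he : sA n i h = sA n i' h') : i = i' := by
  by_contra hne
  have hap := congrArg (fun σ : Equiv.Perm (Fin n) => σ ⟨i, Nat.lt_of_succ_lt h⟩) he
  simp only [sA] at hap
  rw [Equiv.swap_apply_left] at hap
  by_cases hii : i = i' + 1
  · have : (⟨i, Nat.lt_of_succ_lt h⟩ : Fin n) = ⟨i' + 1, h'⟩ := Fin.ext hii
    rw [this, Equiv.swap_apply_right] at hap
    have := congrArg Fin.val hap
    simp at this
    omega
  · rw [Equiv.swap_apply_of_ne_of_ne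
      (fun hc => hne (congrArg Fin.val hc))
      (fun hc => hii (congrArg Fin.val hc))] at hap
    have := congrArg Fin.val hap
    simp at this

lemma edgeSet_ncard (Q : ℕ → Prop) [DecidablePred Q] (hQ : ∀ i, Q i → i + 1 < n) :
    (edgeSet n Q).ncard = ((Finset.range (n - 1)).filter Q).card := by
  classical
  have hset : edgeSet n Q =
      ↑(((Finset.range (n - 1)).filter Q).image
        (fun i => if h : i + 1 < n then sA n i h else 1)) := by
    ext σ
    simp only [edgeSet, Set.mem_setOf_eq, Finset.coe_image, Set.mem_image, Finset.mem_coe,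
      Finset.mem_filter, Finset.mem_range]
    constructor
    · rintro ⟨i, hQi, h, rfl⟩
      exact ⟨i, ⟨by omega, hQi⟩, by simp only [dif_pos h]⟩
    · rintro ⟨i, ⟨hir, hQi⟩, hfi⟩
      have h := hQ i hQi
      simp only [dif_pos h] at hfi
      exact ⟨i, hQi, h, hfi.symm⟩
  rw [hset, Set.ncard_coe_finset]
  rw [Finset.card_image_of_injOn]
  intro a ha b hb hab
  simp only [Finset.coe_filter, Set.mem_setOf_eq, Finset.mem_range] at ha hb
  simp only [dif_pos (hQ a ha.2), dif_pos (hQ b hb.2)] at hab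
  exact sA_index_inj hab

lemma mono_count {β : Type*} [LinearOrder β] [DecidableEq β] (g : Fin n → β)
    [DecidablePred (fun i => ∃ h : i + 1 < n, g ⟨i, Nat.lt_of_succ_lt h⟩ = g ⟨i + 1, h⟩)]
    (hn : 1 ≤ n) (hg : Monotone g) :
    ((Finset.range (n - 1)).filter
        (fun i => ∃ h : i + 1 < n, g ⟨i, Nat.lt_of_succ_lt h⟩ = g ⟨i + 1, h⟩)).card
      + (Finset.image g Finset.univ).card = n := by
  classical
  set S := Finset.univ.filter
    (fun i : Fin n => ∀ _ : 0 < (i : ℕ), g ⟨(i : ℕ) - 1, Nat.lt_of_le_of_lt (Nat.sub_le _ _) i.isLt⟩ ≠ g i) with hS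
  have hkey : ∀ a b : Fin n, b ∈ S → a < b → g a ≠ g b := by
    intro a b hb hab
    have hb0 : 0 < (b : ℕ) := by
      have : (a : ℕ) < (b : ℕ) := hab
      omega
    have hjump := (Finset.mem_filter.mp hb).2 hb0
    have h1 : g ⟨(b : ℕ) - 1, by omega⟩ < g b :=
      lt_of_le_of_ne (hg (by rw [Fin.le_def]; simp)) hjump
    have h2 : g a ≤ g ⟨(b : ℕ) - 1, by omega⟩ := by
      apply hg
      rw [Fin.le_def]
      simp
      have : (a : ℕ) < (b : ℕ) := hab
      omega
    exact ne_of_lt (lt_of_le_of_lt h2 h1)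
  have hSim : Finset.image g Finset.univ = Finset.image g S := by
    apply Finset.Subset.antisymm
    · intro v hv
      obtain ⟨x, _, rfl⟩ := Finset.mem_image.mp hv
      set F := Finset.univ.filter (fun z : Fin n => g z = g x) with hF
      have hFne : F.Nonempty := ⟨x, by simp [hF]⟩
      set m := F.min' hFne with hm
      have hmF : m ∈ F := Finset.min'_mem _ _
      have hmgx : g m = g x := (Finset.mem_filter.mp hmF).2
      have hmS : m ∈ S := by
        refine Finset.mem_filter.mpr ⟨Finset.mem_univ _, ?_⟩
        intro h0 hceq
        have hmem : (⟨(m : ℕ) - 1, by omega⟩ : Fin n) ∈ F :=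
          Finset.mem_filter.mpr ⟨Finset.mem_univ _, by rw [hceq, hmgx]⟩
        have hle := Finset.min'_le F _ hmem
        rw [Fin.le_def] at hle
        simp at hle
        omega
      exact Finset.mem_image.mpr ⟨m, hmS, hmgx⟩
    · exact Finset.image_subset_image (Finset.filter_subset _ _)
  have hScard : (Finset.image g S).card = S.card := by
    apply Finset.card_image_of_injOn
    intro a ha b hb hab
    by_contra hne
    rcases lt_or_gt_of_ne hne with hlt | hgt
    · exact hkey a b hb hlt hab
    · exact hkey b a ha hgt hab.symm
  have hpart := Finset.card_filter_add_card_filter_not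
    (s := (Finset.univ : Finset (Fin n)))
    (p := fun i : Fin n => ∀ _ : 0 < (i : ℕ), g ⟨(i : ℕ) - 1, Nat.lt_of_le_of_lt (Nat.sub_le _ _) i.isLt⟩ ≠ g i)
  have hbij : (Finset.univ.filter
      (fun i : Fin n => ¬ ∀ _ : 0 < (i : ℕ), g ⟨(i : ℕ) - 1, Nat.lt_of_le_of_lt (Nat.sub_le _ _) i.isLt⟩ ≠ g i)).card
      = ((Finset.range (n - 1)).filter
        (fun i => ∃ h : i + 1 < n, g ⟨i, Nat.lt_of_succ_lt h⟩ = g ⟨i + 1, h⟩)).card := by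
    apply Finset.card_bij (fun (i : Fin n) _ => (i : ℕ) - 1)
    · intro i hi
      simp only [Finset.mem_filter, Finset.mem_univ, true_and] at hi
      push_neg at hi
      obtain ⟨h0, heq⟩ := hi
      simp only [Finset.mem_filter, Finset.mem_range]
      have hin : (i : ℕ) < n := i.isLt
      refine ⟨by omega, by omega, ?_⟩
      have : (⟨(i : ℕ) - 1 + 1, by omega⟩ : Fin n) = i := Fin.ext (by simp; omega)
      rw [this]
      exact heq
    · intro a ha b hb hab
      simp only [Finset.mem_filter, Finset.mem_univ, true_and] at ha hb
      push_neg at ha hb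
      obtain ⟨ha0, -⟩ := ha
      obtain ⟨hb0, -⟩ := hb
      exact Fin.ext (by omega)
    · intro j hj
      simp only [Finset.mem_filter, Finset.mem_range] at hj
      obtain ⟨hjr, h, heq⟩ := hj
      refine ⟨⟨j + 1, h⟩, ?_, by simp⟩
      simp only [Finset.mem_filter, Finset.mem_univ, true_and]
      push_neg
      refine ⟨by simp, ?_⟩
      have : (⟨j + 1 - 1, by omega⟩ : Fin n) = ⟨j, Nat.lt_of_succ_lt h⟩ := Fin.ext (by simp)
      rw [this]
      exact heq
  rw [hSim, hScard]
  rw [← hbij]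
  rw [Finset.card_univ, Fintype.card_fin] at hpart
  rw [hS]
  omega

end Combinatorics

section Generation
open Equiv Finset

variable {n : ℕ}

lemma swap_mem_closure_interval {β : Type*} [LinearOrder β] (g : Fin n → β) (hg : Monotone g) :
    ∀ (d a b : ℕ) (hab : a < b), b - a ≤ d → ∀ (hb : b < n),
    g ⟨a, lt_trans hab hb⟩ = g ⟨b, hb⟩ →
    Equiv.swap ⟨a, lt_trans hab hb⟩ ⟨b, hb⟩ ∈
      Subgroup.closure (edgeSet n
        (fun i => ∃ h : i + 1 < n, g ⟨i, Nat.lt_of_succ_lt h⟩ = g ⟨i + 1, h⟩)) := by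
  intro d
  induction d with
  | zero => intro a b hab hd hb _; omega
  | succ d ih =>
    intro a b hab hd hb hgeq
    by_cases hb1 : b = a + 1
    · subst hb1
      apply Subgroup.subset_closure
      exact ⟨a, ⟨hb, hgeq⟩, hb, rfl⟩
    · have hb' : (b - 1) + 1 < n := by omega
      have hab' : a < b - 1 := by omega
      have hg1 : g ⟨b - 1, Nat.lt_of_succ_lt hb'⟩ = g ⟨b, hb⟩ := by
        apply le_antisymm
        · exact hg (by rw [Fin.le_def]; simp)
        · rw [← hgeq]
          exact hg (by rw [Fin.le_def]; simp; omega)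
      have hsmem : sA n (b - 1) hb' ∈ Subgroup.closure (edgeSet n
          (fun i => ∃ h : i + 1 < n, g ⟨i, Nat.lt_of_succ_lt h⟩ = g ⟨i + 1, h⟩)) := by
        apply Subgroup.subset_closure
        refine ⟨b - 1, ⟨hb', ?_⟩, hb', rfl⟩
        have he : (⟨b - 1 + 1, hb'⟩ : Fin n) = ⟨b, hb⟩ := Fin.ext (by simp; omega)
        rw [he]
        exact hg1
      set s := sA n (b - 1) hb' with hs
      have hsb : s ⟨b - 1, Nat.lt_of_succ_lt hb'⟩ = ⟨b, hb⟩ := by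
        rw [hs, sA, Equiv.swap_apply_left]
        exact Fin.ext (by simp; omega)
      have hsa : s ⟨a, lt_trans hab hb⟩ = ⟨a, lt_trans hab hb⟩ := by
        rw [hs, sA]
        apply Equiv.swap_apply_of_ne_of_ne <;>
          exact fun hc => by have := congrArg Fin.val hc; simp at this; omega
      have hkey : Equiv.swap (⟨a, lt_trans hab hb⟩ : Fin n) ⟨b, hb⟩ =
          s * Equiv.swap ⟨a, lt_trans hab' (Nat.lt_of_succ_lt hb')⟩
            ⟨b - 1, Nat.lt_of_succ_lt hb'⟩ * s⁻¹ := by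
        rw [← Equiv.swap_apply_apply s]
        congr 1
        · exact hsa.symm
        · exact hsb.symm
      rw [hkey]
      have hgeq' : g ⟨a, lt_trans hab' (Nat.lt_of_succ_lt hb')⟩ = g ⟨b - 1, Nat.lt_of_succ_lt hb'⟩ := by
        rw [hg1]
        exact hgeq
      exact mul_mem (mul_mem hsmem (ih a (b - 1) hab' (by omega) (Nat.lt_of_succ_lt hb') hgeq'))
        (inv_mem hsmem)

lemma swap_mem_closure_fiber {β : Type*} [LinearOrder β] (g : Fin n → β) (hg : Monotone g)
    (x y : Fin n) (hxy : x ≠ y) (hgeq : g x = g y) :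
    Equiv.swap x y ∈ Subgroup.closure (edgeSet n
      (fun i => ∃ h : i + 1 < n, g ⟨i, Nat.lt_of_succ_lt h⟩ = g ⟨i + 1, h⟩)) := by
  rcases lt_trichotomy (x : ℕ) (y : ℕ) with hlt | heq | hgt
  · have := swap_mem_closure_interval g hg n x y hlt (by omega) y.isLt (by simpa [Fin.eta] using hgeq)
    simpa [Fin.eta] using this
  · exact absurd (Fin.ext heq) hxy
  · have := swap_mem_closure_interval g hg n y x hgt (by omega) x.isLt (by simpa [Fin.eta] using hgeq.symm)
    rw [Equiv.swap_comm]
    simpa [Fin.eta] using this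

lemma perm_mem_closure_of_fiber_preserving {β : Type*} [LinearOrder β] (g : Fin n → β)
    (hg : Monotone g) :
    ∀ (k : ℕ) (σ : Equiv.Perm (Fin n)),
      (Finset.univ.filter (fun x => σ x ≠ x)).card ≤ k →
      (∀ x, g (σ x) = g x) →
      σ ∈ Subgroup.closure (edgeSet n
        (fun i => ∃ h : i + 1 < n, g ⟨i, Nat.lt_of_succ_lt h⟩ = g ⟨i + 1, h⟩)) := by
  intro k
  induction k with
  | zero =>
    intro σ hcard _
    have hempty : (Finset.univ.filter (fun x => σ x ≠ x)) = ∅ :=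
      Finset.card_eq_zero.mp (Nat.le_zero.mp hcard)
    have : σ = 1 := by
      ext z
      by_contra hz
      have : z ∈ Finset.univ.filter (fun x => σ x ≠ x) := by
        simp only [Finset.mem_filter, Finset.mem_univ, true_and]
        exact fun hc => hz (by rw [hc]; rfl)
      rw [hempty] at this
      exact absurd this (Finset.notMem_empty z)
    rw [this]
    exact one_mem _
  | succ k ih =>
    intro σ hcard hσg
    by_cases hσ1 : σ = 1
    · rw [hσ1]; exact one_mem _
    · have hex : ∃ a, σ a ≠ a := by
        by_contra hall
        push_neg at hall
        exact hσ1 (Equiv.ext hall)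
      obtain ⟨a, ha⟩ := hex
      set s := Equiv.swap a (σ a) with hs
      set σ' := s * σ with hσ'
      have hamem : a ∈ Finset.univ.filter (fun x => σ x ≠ x) := by
        simp only [Finset.mem_filter, Finset.mem_univ, true_and]; exact ha
      have hgs : ∀ z, g (s z) = g z := by
        intro z
        rw [hs]
        by_cases hz1 : z = a
        · rw [hz1, Equiv.swap_apply_left]; exact hσg a
        · by_cases hz2 : z = σ a
          · rw [hz2, Equiv.swap_apply_right]; exact (hσg a).symm
          · rw [Equiv.swap_apply_of_ne_of_ne hz1 hz2]
      have hσ'g : ∀ x, g (σ' x) = g x := by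
        intro x
        rw [hσ', Equiv.Perm.mul_apply, hgs, hσg]
      have hsub : (Finset.univ.filter (fun x => σ' x ≠ x)) ⊆
          (Finset.univ.filter (fun x => σ x ≠ x)).erase a := by
        intro x hx
        simp only [Finset.mem_filter, Finset.mem_univ, true_and] at hx
        rw [Finset.mem_erase]
        constructor
        · intro hxa
          subst hxa
          apply hx
          rw [hσ', Equiv.Perm.mul_apply, hs, Equiv.swap_apply_right]
        · simp only [Finset.mem_filter, Finset.mem_univ, true_and]
          intro hfix
          apply hx
          rw [hσ', Equiv.Perm.mul_apply, hfix, hs]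
          apply Equiv.swap_apply_of_ne_of_ne
          · intro hxa; subst hxa; exact ha hfix
          · intro hxsa
            have : σ x = σ a := by rw [hfix, hxsa]
            have hxa : x = a := σ.injective this
            subst hxa
            exact ha hfix
      have hcard' : (Finset.univ.filter (fun x => σ' x ≠ x)).card ≤ k := by
        have h1 := Finset.card_le_card hsub
        rw [Finset.card_erase_of_mem hamem] at h1
        have h2 : 1 ≤ (Finset.univ.filter (fun x => σ x ≠ x)).card :=
          Finset.card_pos.mpr ⟨a, hamem⟩
        omega
      have hσeq : σ = s * σ' := by
        rw [hσ', ← mul_assoc, hs, Equiv.swap_mul_self, one_mul]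
      rw [hσeq]
      exact mul_mem (swap_mem_closure_fiber g hg a (σ a) (Ne.symm ha) (hσg a).symm)
        (ih σ' hcard' hσ'g)

end Generation

section MinOrbit
open Equiv Finset

variable {n : ℕ}

noncomputable def omin (wC : Equiv.Perm (Fin n)) (x : Fin n) : Fin n :=
  (orbF wC x).min' ⟨x, self_mem_orbF wC x⟩

lemma sameCycle_omin (wC : Equiv.Perm (Fin n)) (x : Fin n) : wC.SameCycle x (omin wC x) :=
  mem_orbF.mp (Finset.min'_mem _ _)

lemma omin_eq_of_sameCycle {wC : Equiv.Perm (Fin n)} {x y : Fin n}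
    (h : wC.SameCycle x y) : omin wC x = omin wC y := by
  have e := orbF_eq_of_sameCycle h
  apply le_antisymm
  · exact Finset.min'_le _ _ (by rw [e]; exact Finset.min'_mem _ _)
  · exact Finset.min'_le _ _ (by rw [← e]; exact Finset.min'_mem _ _)

lemma omin_eq_iff {wC : Equiv.Perm (Fin n)} {x y : Fin n} :
    omin wC x = omin wC y ↔ wC.SameCycle x y := by
  constructor
  · intro h
    exact (sameCycle_omin wC x).trans (h ▸ (sameCycle_omin wC y).symm)
  · exact omin_eq_of_sameCycle

lemma omin_apply (wC : Equiv.Perm (Fin n)) (x : Fin n) : omin wC (wC x) = omin wC x :=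
  omin_eq_of_sameCycle ⟨-1, by simp⟩

end MinOrbit

section Minimality
open Equiv Finset

variable {n : ℕ}

lemma sameCycle_of_FW_eq (hn : 1 ≤ n)
    (C : Set (Equiv.Perm (Fin n))) (hC : ∃ w0, C = {σ | IsConj w0 σ})
    (J : Set (Equiv.Perm (Fin n))) (hJ : J ⊆ simplesA n)
    (hmin : ∀ J' ⊆ simplesA n,
      (C ∩ (Subgroup.closure J' : Set (Equiv.Perm (Fin n)))).Nonempty → J.ncard ≤ J'.ncard)
    (wC : Equiv.Perm (Fin n))
    (hwC : wC ∈ C ∩ (Subgroup.closure J : Set (Equiv.Perm (Fin n)))) :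
    ∀ x y : Fin n, FW J x = FW J y → wC.SameCycle x y := by
  classical
  by_contra hcon
  push_neg at hcon
  obtain ⟨x₀, y₀, hFW0, hnsc⟩ := hcon
  -- the sorting permutation
  set key : Fin n → Lex (Fin n × Fin n) := fun x => toLex (omin wC x, x) with hkey
  set ρ : Equiv.Perm (Fin n) := Tuple.sort key with hρ
  have hmono : Monotone (key ∘ ⇑ρ) := Tuple.monotone_sort key
  have hinj : Function.Injective (key ∘ ⇑ρ) := by
    intro a b hab
    exact ρ.injective (congrArg (fun z => (ofLex z).2) hab)
  set gfun : Fin n → Fin n := fun i => omin wC (ρ i) with hgfun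
  have hgmono : Monotone gfun := by
    intro a b hab
    have h1 := hmono hab
    simp only [Function.comp_apply, hkey] at h1
    rw [Prod.Lex.le_iff] at h1
    rcases h1 with h1 | ⟨h1, _⟩
    · exact le_of_lt h1
    · exact le_of_eq h1
  set w' : Equiv.Perm (Fin n) := ρ⁻¹ * wC * ρ with hw'
  have hw'g : ∀ i, gfun (w' i) = gfun i := by
    intro i
    have h1 : ρ (w' i) = wC (ρ i) := by
      rw [hw']
      simp [Equiv.Perm.mul_apply]
    show omin wC (ρ (w' i)) = omin wC (ρ i)
    rw [h1, omin_apply]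
  have hJ'' : edgeSet n (fun i => ∃ h : i + 1 < n, gfun ⟨i, Nat.lt_of_succ_lt h⟩ = gfun ⟨i + 1, h⟩) ⊆ simplesA n := by
    rintro σ ⟨i, _, h, rfl⟩
    exact ⟨i, h, rfl⟩
  have hw'mem : w' ∈ Subgroup.closure (edgeSet n (fun i => ∃ h : i + 1 < n, gfun ⟨i, Nat.lt_of_succ_lt h⟩ = gfun ⟨i + 1, h⟩)) := by
    apply perm_mem_closure_of_fiber_preserving gfun hgmono
      (Finset.univ.filter (fun x => w' x ≠ x)).card w' le_rfl hw'g
  have hw'C : w' ∈ C := by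
    obtain ⟨w0, rfl⟩ := hC
    have h1 : IsConj w0 wC := hwC.1
    have h2 : IsConj wC w' := by
      rw [isConj_iff]
      exact ⟨ρ⁻¹, by rw [hw', inv_inv]⟩
    exact h1.trans h2
  have hle := hmin (edgeSet n (fun i => ∃ h : i + 1 < n, gfun ⟨i, Nat.lt_of_succ_lt h⟩ = gfun ⟨i + 1, h⟩)) hJ'' ⟨w', hw'C, hw'mem⟩
  -- counting
  have hJeq : J = edgeSet n (fun i => ∃ h : i + 1 < n, sA n i h ∈ J) := by
    ext σ
    constructor
    · intro hσ
      obtain ⟨i, h, rfl⟩ := hJ hσ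
      exact ⟨i, ⟨h, hσ⟩, h, rfl⟩
    · rintro ⟨i, ⟨h', hmem⟩, h, rfl⟩
      exact hmem
  have hJcard : J.ncard = ((Finset.range (n - 1)).filter
      (fun i => ∃ h : i + 1 < n, sA n i h ∈ J)).card :=
    (congrArg Set.ncard hJeq).trans
      (edgeSet_ncard (fun i => ∃ h : i + 1 < n, sA n i h ∈ J) (fun i hi => hi.choose))
  have hJ''card := edgeSet_ncard
    (fun i => ∃ h : i + 1 < n, gfun ⟨i, Nat.lt_of_succ_lt h⟩ = gfun ⟨i + 1, h⟩)
    (fun i hi => hi.choose)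
  -- QJ is the non-jump set of FW J
  have hQJiff : ∀ i ∈ Finset.range (n - 1), ((∃ h : i + 1 < n, sA n i h ∈ J) ↔
      ∃ h : i + 1 < n, FW J ⟨i, Nat.lt_of_succ_lt h⟩ = FW J ⟨i + 1, h⟩) := by
    intro i hi
    rw [Finset.mem_range] at hi
    have h : i + 1 < n := by omega
    constructor
    · intro hQ
      exact ⟨h, (FW_succ_mem J i h hQ).symm⟩
    · rintro ⟨h', heq⟩
      by_contra hnQ
      have := FW_succ_not J i h hnQ
      omega
  have hfiltereq : (Finset.range (n - 1)).filter (fun i => ∃ h : i + 1 < n, sA n i h ∈ J) =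
      (Finset.range (n - 1)).filter
        (fun i => ∃ h : i + 1 < n, FW J ⟨i, Nat.lt_of_succ_lt h⟩ = FW J ⟨i + 1, h⟩) := by
    apply Finset.filter_congr
    intro i hi
    exact hQJiff i hi
  have hcount1 := mono_count (FW J) hn (FW_mono J)
  have hcount2 := mono_count gfun hn hgmono
  -- image of gfun = image of omin
  have himg_g : Finset.image gfun Finset.univ = Finset.image (omin wC) Finset.univ := by
    ext v
    simp only [Finset.mem_image, Finset.mem_univ, true_and]
    constructor
    · rintro ⟨i, rfl⟩; exact ⟨ρ i, rfl⟩
    · rintro ⟨x, rfl⟩; exact ⟨ρ⁻¹ x, by rw [hgfun]; simp⟩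
  -- FW is constant on wC-orbits
  have hFWo : ∀ x, FW J (omin wC x) = FW J x := by
    intro x
    obtain ⟨z, hz⟩ := sameCycle_omin wC x
    have := FW_W J hJ (wC ^ z) (zpow_mem hwC.2 z) x
    rw [hz] at this
    exact this
  set A := Finset.image (omin wC) Finset.univ with hA
  have himg_FW : Finset.image (FW J) Finset.univ = Finset.image (FW J) A := by
    ext v
    simp only [hA, Finset.mem_image, Finset.mem_univ, true_and, exists_exists_eq_and]
    constructor
    · rintro ⟨x, rfl⟩; exact ⟨x, hFWo x⟩
    · rintro ⟨x, rfl⟩; exact ⟨omin wC x, rfl⟩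
  have hox₀ : omin wC x₀ ∈ A := by rw [hA]; exact Finset.mem_image_of_mem _ (Finset.mem_univ _)
  have hoy₀ : omin wC y₀ ∈ A := by rw [hA]; exact Finset.mem_image_of_mem _ (Finset.mem_univ _)
  have hno : omin wC x₀ ≠ omin wC y₀ := fun hc => hnsc (omin_eq_iff.mp hc)
  have hsub : Finset.image (FW J) A ⊆ Finset.image (FW J) (A.erase (omin wC x₀)) := by
    intro v hv
    obtain ⟨a, haA, rfl⟩ := Finset.mem_image.mp hv
    by_cases hax : a = omin wC x₀
    · subst hax
      refine Finset.mem_image.mpr ⟨omin wC y₀, Finset.mem_erase.mpr ⟨hno.symm, hoy₀⟩, ?_⟩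
      rw [hFWo, hFWo, hFW0]
    · exact Finset.mem_image.mpr ⟨a, Finset.mem_erase.mpr ⟨hax, haA⟩, rfl⟩
  have hAcard : 1 ≤ A.card := Finset.card_pos.mpr ⟨omin wC x₀, hox₀⟩
  have hcardlt : (Finset.image (FW J) Finset.univ).card + 1 ≤ A.card := by
    have h1 := Finset.card_le_card hsub
    have h2 := Finset.card_image_le (f := FW J) (s := A.erase (omin wC x₀))
    rw [Finset.card_erase_of_mem hox₀] at h2
    rw [himg_FW]
    omega
  rw [hfiltereq] at hJcard
  rw [himg_g] at hcount2
  rw [hJcard] at hle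
  rw [hJ''card] at hle
  omega

end Minimality

section Conjugator
open Equiv Finset

variable {n : ℕ}

lemma isCycleOn_orbF (wC : Equiv.Perm (Fin n)) (x : Fin n) :
    wC.IsCycleOn ↑(orbF wC x) := by
  constructor
  · refine ⟨?_, wC.injective.injOn, ?_⟩
    · intro y hy
      rw [Finset.mem_coe, mem_orbF] at *
      exact Equiv.Perm.sameCycle_apply_right.mpr hy
    · intro y hy
      refine ⟨wC⁻¹ y, ?_, by simp⟩
      rw [Finset.mem_coe, mem_orbF] at *
      exact (Equiv.Perm.sameCycle_apply_right (f := wC)).mp (by simpa using hy)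
  · intro a ha b hb
    rw [Finset.mem_coe, mem_orbF] at ha hb
    exact ha.symm.trans hb

lemma exists_blockwise_conj (wC w'' : Equiv.Perm (Fin n))
    (hS : ∀ a b, w''.SameCycle a b ↔ wC.SameCycle a b) :
    ∃ τ : Equiv.Perm (Fin n), τ * w'' * τ⁻¹ = wC ∧ ∀ x, wC.SameCycle x (τ x) := by
  have horb : ∀ x, orbF w'' x = orbF wC x := by
    intro x; ext y; simp only [mem_orbF]; exact hS x y
  have hcycW : ∀ x, wC.IsCycleOn ↑(orbF wC x) := isCycleOn_orbF wC
  have hcyc'' : ∀ x : Fin n, w''.IsCycleOn ↑(orbF wC x) := by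
    intro x; rw [← horb]; exact isCycleOn_orbF w'' x
  have hex : ∀ x, ∃ tt : ℕ, (w'' ^ tt) (omin wC x) = x := by
    intro x
    have hbm : omin wC x ∈ orbF wC x := Finset.min'_mem _ _
    have hxm : x ∈ orbF wC x := self_mem_orbF wC x
    obtain ⟨tt, _, htt⟩ := (hcyc'' x).exists_pow_eq hbm hxm
    exact ⟨tt, htt⟩
  choose t ht using hex
  set τf : Fin n → Fin n := fun x => (wC ^ t x) (omin wC x) with hτf
  have hτf_sc : ∀ x, wC.SameCycle x (τf x) := by
    intro x
    have h1 : wC.SameCycle (omin wC x) (τf x) := ⟨(t x : ℤ), by rw [zpow_natCast]⟩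
    exact (sameCycle_omin wC x).trans h1
  have hinj : Function.Injective τf := by
    intro x y hxy
    have hox : wC.SameCycle x y := (hτf_sc x).trans (hxy ▸ (hτf_sc y).symm)
    have homin : omin wC x = omin wC y := omin_eq_of_sameCycle hox
    have hbm : omin wC x ∈ orbF wC x := Finset.min'_mem _ _
    have hxy' : (wC ^ t x) (omin wC x) = (wC ^ t y) (omin wC x) := by
      have := hxy
      rw [hτf] at this
      simp only at this
      rw [← homin] at this
      exact this
    have hmod : t x ≡ t y [MOD (orbF wC x).card] :=
      ((hcycW x).pow_apply_eq_pow_apply hbm).mp hxy'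
    have h3 : (w'' ^ t x) (omin wC x) = (w'' ^ t y) (omin wC x) :=
      ((hcyc'' x).pow_apply_eq_pow_apply hbm).mpr hmod
    rw [ht x, homin, ht y] at h3
    exact h3
  have hbij := Finite.injective_iff_bijective.mp hinj
  set τ : Equiv.Perm (Fin n) := Equiv.ofBijective τf hbij with hτ
  have hτ_apply : ∀ x, τ x = τf x := fun x => rfl
  have hinter : ∀ z, τf (w'' z) = wC (τf z) := by
    intro z
    have hsc : wC.SameCycle z (w'' z) := (hS z (w'' z)).mp ⟨1, by simp⟩
    have homz : omin wC (w'' z) = omin wC z := (omin_eq_of_sameCycle hsc).symm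
    have hbm : omin wC z ∈ orbF wC z := Finset.min'_mem _ _
    have h1 : (w'' ^ (t (w'' z))) (omin wC z) = w'' z := by
      conv_lhs => rw [← homz]
      exact ht (w'' z)
    have h2 : (w'' ^ (t z + 1)) (omin wC z) = w'' z := by
      rw [pow_succ', Equiv.Perm.mul_apply, ht z]
    have hmod : t (w'' z) ≡ t z + 1 [MOD (orbF wC z).card] :=
      ((hcyc'' z).pow_apply_eq_pow_apply hbm).mp (by rw [h1, h2])
    have h3 : (wC ^ (t (w'' z))) (omin wC z) = (wC ^ (t z + 1)) (omin wC z) :=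
      ((hcycW z).pow_apply_eq_pow_apply hbm).mpr hmod
    calc τf (w'' z) = (wC ^ (t (w'' z))) (omin wC (w'' z)) := rfl
      _ = (wC ^ (t (w'' z))) (omin wC z) := by rw [homz]
      _ = (wC ^ (t z + 1)) (omin wC z) := h3
      _ = wC ((wC ^ (t z)) (omin wC z)) := by rw [pow_succ', Equiv.Perm.mul_apply]
      _ = wC (τf z) := rfl
  refine ⟨τ, ?_, fun x => by rw [hτ_apply]; exact hτf_sc x⟩
  ext z
  simp only [Equiv.Perm.mul_apply]
  have hz : τf (τ⁻¹ z) = z := by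
    rw [← hτ_apply]
    exact τ.apply_symm_apply z
  rw [hτ_apply, hinter, hz]

end Conjugator


/-- In the degenerate affine Hecke-Clifford algebra of type `A_{n-1}`
with parameter `u = 0`: for a conjugacy class `C` of `S_n`, a subset `J` of the simple
transpositions of minimal cardinality meeting `C`, and `w_C ∈ C ∩ W_J`, every element
`w_C f` with `f ∈ ℂ[x_1², …, x_n²]` is congruent modulo commutators to `w_C g` for some
`g ∈ S((V²)^{W_J})^{N_{S_n}(W_J)}`. -/
theorem elliptic_reduction_graded_typeA (n : ℕ) (hn : 2 ≤ n)
    (C : Set (Equiv.Perm (Fin n))) (hC : ∃ w0, C = {σ | IsConj w0 σ})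
    (J : Set (Equiv.Perm (Fin n))) (hJ : J ⊆ simplesA n)
    (hmeet : (C ∩ (Subgroup.closure J : Set (Equiv.Perm (Fin n)))).Nonempty)
    (hmin : ∀ J' ⊆ simplesA n,
      (C ∩ (Subgroup.closure J' : Set (Equiv.Perm (Fin n)))).Nonempty →
        J.ncard ≤ J'.ncard)
    (wC : Equiv.Perm (Fin n))
    (hwC : wC ∈ C ∩ (Subgroup.closure J : Set (Equiv.Perm (Fin n))))
    (f : MvPolynomial (Fin n) ℂ)
    (hf : f ∈ Algebra.adjoin ℂ (Set.range fun i : Fin n => (MvPolynomial.X i) ^ 2)) :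
    ∃ g ∈ SInvJ n J,
      wH n 0 wC * evP n 0 f - wH n 0 wC * evP n 0 g ∈ commSpan (HA n 0) := by
  classical
  obtain ⟨hwC_C, hwC_W⟩ := hwC
  have hFWsc := sameCycle_of_FW_eq (by omega) C hC J hJ hmin wC ⟨hwC_C, hwC_W⟩
  have hWsc : ∀ w ∈ Subgroup.closure J, ∀ x y : Fin n, w.SameCycle x y → wC.SameCycle x y := by
    rintro w hw x y ⟨z, hz⟩
    apply hFWsc
    have h1 := FW_W J hJ (w ^ z) (zpow_mem hw z) x
    rw [hz] at h1
    exact h1.symm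
  set N' := Subgroup.normalizer ((Subgroup.closure J : Subgroup (Equiv.Perm (Fin n))) : Set (Equiv.Perm (Fin n))) with hN'
  have hnorm_sc : ∀ σ ∈ N', ∀ x y : Fin n, wC.SameCycle x y → wC.SameCycle (σ x) (σ y) := by
    intro σ hσ x y hsc
    have h1 : (σ * wC * σ⁻¹).SameCycle (σ x) (σ y) := hsc.conj
    have h2 : σ * wC * σ⁻¹ ∈ Subgroup.closure J :=
      (Subgroup.mem_normalizer_iff.mp hσ wC).mp hwC_W
    exact hWsc _ h2 _ _ h1
  have himg : ∀ σ ∈ N', ∀ x, (orbF wC x).image ⇑σ = orbF wC (σ x) := by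
    intro σ hσ x
    apply Finset.Subset.antisymm
    · intro y hy
      obtain ⟨z, hz, rfl⟩ := Finset.mem_image.mp hy
      rw [mem_orbF] at *
      exact hnorm_sc σ hσ x z hz
    · intro y hy
      rw [mem_orbF] at hy
      refine Finset.mem_image.mpr ⟨σ⁻¹ y, ?_, by simp⟩
      rw [mem_orbF]
      have h1 := hnorm_sc σ⁻¹ (inv_mem hσ) (σ x) y hy
      simpa using h1
  have hren : ∀ σ ∈ N', ∀ x, MvPolynomial.rename ⇑σ (pB wC x) = pB wC (σ x) :=
    fun σ hσ x => rename_pB_of_image σ x (himg σ hσ x)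
  have hWimg : ∀ w ∈ Subgroup.closure J, ∀ x, (orbF wC x).image ⇑w = orbF wC x := by
    intro w hw x
    apply Finset.eq_of_subset_of_card_le
    · intro y hy
      obtain ⟨z, hz, rfl⟩ := Finset.mem_image.mp hy
      rw [mem_orbF] at *
      exact hz.trans (hWsc w hw z (w z) ⟨1, by simp⟩)
    · rw [Finset.card_image_of_injective _ w.injective]
  have hrenW : ∀ w ∈ Subgroup.closure J, ∀ x, MvPolynomial.rename ⇑w (pB wC x) = pB wC x := by
    intro w hw x
    calc MvPolynomial.rename ⇑w (pB wC x) = ∑ y ∈ (orbF wC x).image ⇑w, MvPolynomial.X y ^ 2 := by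
          rw [pB, map_sum]
          simp_rw [map_pow, MvPolynomial.rename_X]
          rw [Finset.sum_image (fun a _ b _ h => w.injective h)]
      _ = pB wC x := by rw [hWimg w hw x, pB]
  have hpB_V2J : ∀ x, pB wC x ∈ V2J n J := by
    intro x
    rw [V2J, Submodule.mem_inf]
    constructor
    · apply Submodule.sum_mem
      intro y _
      exact Submodule.subset_span ⟨y, rfl⟩
    · intro w hw
      exact hrenW w hw x
  have hP0_le : ∀ p ∈ P0 wC, p ∈ SV2J n J := by
    intro p hp
    refine Algebra.adjoin_le ?_ hp
    rintro q ⟨x, rfl⟩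
    exact Algebra.subset_adjoin (hpB_V2J x)
  obtain ⟨g₀, hg₀P, hg₀I⟩ := collapse wC hf
  have hstar : ∀ σ ∈ N', g₀ - MvPolynomial.rename ⇑σ g₀ ∈ Kmod wC := by
    intro σ hσ
    have hS'' : ∀ a b, (σ * wC * σ⁻¹).SameCycle a b ↔ wC.SameCycle a b := by
      intro a b
      constructor
      · intro h
        exact hWsc _ ((Subgroup.mem_normalizer_iff.mp hσ wC).mp hwC_W) a b h
      · intro h
        have h1 := hnorm_sc σ⁻¹ (inv_mem hσ) a b h
        have h2 := h1.conj (g := σ)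
        simpa using h2
    obtain ⟨τ, hτconj, hτsc⟩ := exists_blockwise_conj wC (σ * wC * σ⁻¹) hS''
    have hτimg : ∀ x, (orbF wC x).image ⇑τ = orbF wC x := by
      intro x
      apply Finset.eq_of_subset_of_card_le
      · intro y hy
        obtain ⟨z, hz, rfl⟩ := Finset.mem_image.mp hy
        rw [mem_orbF] at *
        exact hz.trans (hτsc z)
      · rw [Finset.card_image_of_injective _ τ.injective]
    have hτfix : ∀ p ∈ P0 wC, MvPolynomial.rename ⇑τ p = p := by
      apply rename_fix_P0
      intro x
      calc MvPolynomial.rename ⇑τ (pB wC x) = ∑ y ∈ (orbF wC x).image ⇑τ, MvPolynomial.X y ^ 2 := by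
            rw [pB, map_sum]
            simp_rw [map_pow, MvPolynomial.rename_X]
            rw [Finset.sum_image (fun a _ b _ h => τ.injective h)]
        _ = pB wC x := by rw [hτimg x, pB]
    rw [mem_Kmod_iff, evP_sub, mul_sub]
    have e1 : wH n 0 σ * (wH n 0 wC * evP n 0 g₀) * wH n 0 σ⁻¹ =
        wH n 0 (σ * wC * σ⁻¹) * evP n 0 (MvPolynomial.rename ⇑σ g₀) := conj_wH_evP σ wC g₀
    have e2 : wH n 0 τ * (wH n 0 (σ * wC * σ⁻¹) * evP n 0 (MvPolynomial.rename ⇑σ g₀)) * wH n 0 τ⁻¹ =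
        wH n 0 wC * evP n 0 (MvPolynomial.rename ⇑σ g₀) := by
      rw [conj_wH_evP τ (σ * wC * σ⁻¹) (MvPolynomial.rename ⇑σ g₀), hτconj,
        hτfix _ (rename_mem_P0 σ (hren σ hσ) g₀ hg₀P)]
    have m1 : wH n 0 wC * evP n 0 g₀ -
        wH n 0 (σ * wC * σ⁻¹) * evP n 0 (MvPolynomial.rename ⇑σ g₀) ∈ commSpan (HA n 0) := by
      rw [← e1]
      exact conj_mem_commSpan _ _ _ (wH_inv_mul σ)
    have m2 : wH n 0 (σ * wC * σ⁻¹) * evP n 0 (MvPolynomial.rename ⇑σ g₀) -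
        wH n 0 wC * evP n 0 (MvPolynomial.rename ⇑σ g₀) ∈ commSpan (HA n 0) := by
      rw [← e2]
      exact conj_mem_commSpan _ _ _ (wH_inv_mul τ)
    have h3 := add_mem m1 m2
    rw [sub_add_sub_cancel] at h3
    exact h3
  haveI : Fintype ↥N' := Fintype.ofFinite _
  set m : ℂ := (Fintype.card ↥N' : ℂ) with hm
  have hm0 : m ≠ 0 := Nat.cast_ne_zero.mpr Fintype.card_ne_zero
  set g : MvPolynomial (Fin n) ℂ :=
    m⁻¹ • ∑ σ : ↥N', MvPolynomial.rename ⇑(σ : Equiv.Perm (Fin n)) g₀ with hg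
  have hgP0 : g ∈ P0 wC := by
    rw [hg]
    apply Subalgebra.smul_mem
    apply Subalgebra.sum_mem
    intro σ _
    exact rename_mem_P0 _ (hren _ σ.2) g₀ hg₀P
  have hgfix : ∀ η ∈ (N' : Set (Equiv.Perm (Fin n))), MvPolynomial.rename ⇑η g = g := by
    intro η hη
    have step1 : MvPolynomial.rename ⇑η g =
        m⁻¹ • ∑ σ : ↥N', MvPolynomial.rename ⇑(((⟨η, hη⟩ : ↥N') * σ : ↥N') : Equiv.Perm (Fin n)) g₀ := by
      rw [hg, map_smul, map_sum]
      congr 1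
      apply Finset.sum_congr rfl
      intro σ _
      rw [MvPolynomial.rename_rename]
      rfl
    rw [step1, hg]
    congr 1
    exact (Fintype.sum_equiv (Equiv.mulLeft ((⟨η, hη⟩ : ↥N')⁻¹))
      (fun σ => MvPolynomial.rename ⇑((σ : Equiv.Perm (Fin n))) g₀)
      (fun σ => MvPolynomial.rename ⇑(((⟨η, hη⟩ : ↥N') * σ : ↥N') : Equiv.Perm (Fin n)) g₀)
      (fun σ => by simp [Equiv.coe_mulLeft, mul_inv_cancel_left])).symm
  refine ⟨g, ?_, ?_⟩
  · rw [SInvJ, Submodule.mem_inf]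
    exact ⟨hP0_le g hgP0, hgfix⟩
  · have hKg : f - g ∈ Kmod wC := by
      have hsplit : f - g = (f - g₀) + (g₀ - g) := by ring
      rw [hsplit]
      apply add_mem
      · exact Iw_le_Kmod wC _ hg₀I
      · have hdiff : g₀ - g = m⁻¹ • ∑ σ : ↥N', (g₀ - MvPolynomial.rename ⇑(σ : Equiv.Perm (Fin n)) g₀) := by
          rw [Finset.sum_sub_distrib, Finset.sum_const, Finset.card_univ, smul_sub, hg]
          congr 1
          rw [← Nat.cast_smul_eq_nsmul ℂ, ← hm, smul_smul, inv_mul_cancel₀ hm0, one_smul]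
        rw [hdiff]
        apply Submodule.smul_mem
        apply Submodule.sum_mem
        intro σ _
        exact hstar _ σ.2
    rw [mem_Kmod_iff, evP_sub, mul_sub] at hKg
    exact hKg


end DAHCA
end

section
/- Let n ≥ 2 and let ℌ⁻ be the degenerate spin affine Hecke algebra of type A_{n−1}. Let γ = (γ_1,…,γ_k) be a composition of n with ℓ(t_γ) = n − k even, and let μ be the partition of n obtained by sorting the parts of γ in decreasing order. If μ ∉ 𝒪𝒫_n, then t_γ ∈ [ℌ⁻, ℌ⁻]. If μ ∈ 𝒪𝒫_n, then t_γ − t_μ ∈ [ℌ⁻, ℌ⁻] or t_γ + t_μ ∈ [ℌ⁻, ℌ⁻]. -/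
namespace SAHA

/-- Generators of the degenerate spin affine Hecke algebra of type `A_{n-1}`:
`t_1, …, t_{n-1}` and `b_1, …, b_n`. -/
inductive GenS (n : ℕ) : Type
  | t : Fin (n - 1) → GenS n
  | b : Fin n → GenS n

noncomputable def T (n : ℕ) (i : Fin (n - 1)) : FreeAlgebra ℂ (GenS n) :=
  FreeAlgebra.ι ℂ (GenS.t i)
noncomputable def B (n : ℕ) (i : Fin n) : FreeAlgebra ℂ (GenS n) :=
  FreeAlgebra.ι ℂ (GenS.b i)

/-- The defining relations of the degenerate spin affine Hecke algebra of type
`A_{n-1}`. -/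
inductive RelS (n : ℕ) : FreeAlgebra ℂ (GenS n) → FreeAlgebra ℂ (GenS n) → Prop
  | tsq (i : Fin (n - 1)) : RelS n (T n i * T n i) 1
  | braid (i : ℕ) (h : i + 1 < n - 1) :
      RelS n (T n ⟨i, Nat.lt_of_succ_lt h⟩ * T n ⟨i + 1, h⟩ * T n ⟨i, Nat.lt_of_succ_lt h⟩)
        (T n ⟨i + 1, h⟩ * T n ⟨i, Nat.lt_of_succ_lt h⟩ * T n ⟨i + 1, h⟩)
  | tt (i j : Fin (n - 1)) (hij : (i : ℕ) + 1 < (j : ℕ) ∨ (j : ℕ) + 1 < (i : ℕ)) :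
      RelS n ((T n i * T n j) * (T n i * T n j)) (-1)
  | bb (i j : Fin n) (hij : i ≠ j) : RelS n (B n i * B n j) (-(B n j * B n i))
  | bt (i : ℕ) (h : i + 1 < n) :
      RelS n (B n ⟨i + 1, h⟩ * T n ⟨i, by omega⟩ + T n ⟨i, by omega⟩ *
        B n ⟨i, Nat.lt_of_succ_lt h⟩) 1
  | tb (j : Fin (n - 1)) (i : Fin n) (h1 : (i : ℕ) ≠ (j : ℕ)) (h2 : (i : ℕ) ≠ (j : ℕ) + 1) :
      RelS n (T n j * B n i + B n i * T n j) 0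

/-- The degenerate spin affine Hecke algebra of type `A_{n-1}`. -/
abbrev HS (n : ℕ) := RingQuot (RelS n)

noncomputable def tH (n : ℕ) (i : Fin (n - 1)) : HS n :=
  RingQuot.mkAlgHom ℂ (RelS n) (T n i)
noncomputable def bH (n : ℕ) (i : Fin n) : HS n :=
  RingQuot.mkAlgHom ℂ (RelS n) (B n i)

/-- `t_k` for a natural-number index (`t_{k+1}` in 1-indexed notation), defaulting to `1`
out of range. -/
noncomputable def tN (n : ℕ) (k : ℕ) : HS n :=
  if h : k < n - 1 then tH n ⟨k, h⟩ else 1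

/-- The linear span of all commutators in an algebra `A`. -/
def commSpan (A : Type*) [Ring A] [Algebra ℂ A] : Submodule ℂ A :=
  Submodule.span ℂ {z : A | ∃ a b : A, z = a * b - b * a}

/-- `t_{(m)}` on the block `[a, b)`: the product `t_{a+1} t_{a+2} ⋯ t_{b-1}`
(1-indexed). -/
noncomputable def tSeg (n : ℕ) (a b : ℕ) : HS n :=
  ((List.range (b - a - 1)).map fun j => tN n (a + j)).prod

/-- `t_γ = t_{(γ_1)} t_{(γ_2)} ⋯ t_{(γ_k)}` for a composition `γ` of `n`. -/
noncomputable def tGamma (n : ℕ) (γ : List ℕ) : HS n :=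
  ((List.range γ.length).map fun k => tSeg n ((γ.take k).sum) ((γ.take (k + 1)).sum)).prod

section RelLemmas

variable (n : ℕ)

lemma rel_tsq (i : Fin (n - 1)) : tH n i * tH n i = 1 := by
  simpa [tH, map_mul] using RingQuot.mkAlgHom_rel ℂ (RelS.tsq (n := n) i)

lemma rel_braid (i : ℕ) (h : i + 1 < n - 1) :
    tH n ⟨i, Nat.lt_of_succ_lt h⟩ * tH n ⟨i + 1, h⟩ * tH n ⟨i, Nat.lt_of_succ_lt h⟩ =
      tH n ⟨i + 1, h⟩ * tH n ⟨i, Nat.lt_of_succ_lt h⟩ * tH n ⟨i + 1, h⟩ := by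
  simpa [tH, map_mul] using RingQuot.mkAlgHom_rel ℂ (RelS.braid (n := n) i h)

lemma rel_tt (i j : Fin (n - 1)) (hij : (i : ℕ) + 1 < (j : ℕ) ∨ (j : ℕ) + 1 < (i : ℕ)) :
    (tH n i * tH n j) * (tH n i * tH n j) = -1 := by
  simpa [tH, map_mul, map_neg, map_one] using RingQuot.mkAlgHom_rel ℂ (RelS.tt (n := n) i j hij)

lemma rel_bb (i j : Fin n) (hij : i ≠ j) : bH n i * bH n j = -(bH n j * bH n i) := by
  simpa [bH, map_mul, map_neg] using RingQuot.mkAlgHom_rel ℂ (RelS.bb (n := n) i j hij)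

lemma rel_bt (i : ℕ) (h : i + 1 < n) :
    bH n ⟨i + 1, h⟩ * tH n ⟨i, by omega⟩ + tH n ⟨i, by omega⟩ *
      bH n ⟨i, Nat.lt_of_succ_lt h⟩ = 1 := by
  simpa [bH, tH, map_mul, map_add, map_one] using
    RingQuot.mkAlgHom_rel ℂ (RelS.bt (n := n) i h)

lemma rel_tb (j : Fin (n - 1)) (i : Fin n) (h1 : (i : ℕ) ≠ (j : ℕ))
    (h2 : (i : ℕ) ≠ (j : ℕ) + 1) :
    tH n j * bH n i + bH n i * tH n j = 0 := by
  simpa [bH, tH, map_mul, map_add] using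
    RingQuot.mkAlgHom_rel ℂ (RelS.tb (n := n) j i h1 h2)

/-- The squares `b_i²` commute pairwise. -/
lemma bsq_comm (i j : Fin n) : bH n i ^ 2 * bH n j ^ 2 = bH n j ^ 2 * bH n i ^ 2 := by
  rcases eq_or_ne i j with rfl | hij
  · rfl
  · set a := bH n i
    set b := bH n j
    have h : a * b = -(b * a) := rel_bb n i j hij
    have aux : a * (b * b) = b * b * a := by
      calc a * (b * b) = a * b * b := (mul_assoc a b b).symm
        _ = -(b * a) * b := congrArg (· * b) h
        _ = -(b * a * b) := neg_mul (b * a) b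
        _ = -(b * (a * b)) := neg_inj.mpr (mul_assoc b a b)
        _ = -(b * -(b * a)) := neg_inj.mpr (congrArg (b * ·) h)
        _ = -(-(b * (b * a))) := neg_inj.mpr (mul_neg b (b * a))
        _ = b * (b * a) := neg_neg (b * (b * a))
        _ = b * b * a := (mul_assoc b b a).symm
    have main : a * a * (b * b) = b * b * (a * a) := by
      calc a * a * (b * b) = a * (a * (b * b)) := mul_assoc a a (b * b)
        _ = a * (b * b * a) := congrArg (a * ·) aux
        _ = a * (b * b) * a := (mul_assoc a (b * b) a).symm
        _ = b * b * a * a := congrArg (· * a) aux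
        _ = b * b * (a * a) := mul_assoc (b * b) a a
    calc a ^ 2 * b ^ 2 = a * a * (b * b) := by rw [pow_two, pow_two]
      _ = b * b * (a * a) := main
      _ = b ^ 2 * a ^ 2 := by rw [pow_two, pow_two]

end RelLemmas

/-- The parity automorphism of the superalgebra `HS n`: it negates all the (odd)
generators `t_i` and `b_i`. -/
noncomputable def thetaS (n : ℕ) : HS n →ₐ[ℂ] HS n :=
  RingQuot.liftAlgHom ℂ ⟨FreeAlgebra.lift ℂ (fun g => match g with
      | GenS.t i => -(tH n i)
      | GenS.b i => -(bH n i)), by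
    intro a b hab
    induction hab with
    | tsq i =>
        simp only [map_mul, map_one, map_neg, T, FreeAlgebra.lift_ι_apply]
        exact (neg_mul_neg (tH n i) (tH n i)).trans (rel_tsq n i)
    | braid i h =>
        simp only [map_mul, map_neg, T, FreeAlgebra.lift_ι_apply]
        calc -tH n ⟨i, Nat.lt_of_succ_lt h⟩ * -tH n ⟨i + 1, h⟩ * -tH n ⟨i, Nat.lt_of_succ_lt h⟩
            = (tH n ⟨i, Nat.lt_of_succ_lt h⟩ * tH n ⟨i + 1, h⟩) * -tH n ⟨i, Nat.lt_of_succ_lt h⟩ :=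
              congrArg (· * -tH n ⟨i, Nat.lt_of_succ_lt h⟩)
                (neg_mul_neg (tH n ⟨i, Nat.lt_of_succ_lt h⟩) (tH n ⟨i + 1, h⟩))
          _ = -(tH n ⟨i, Nat.lt_of_succ_lt h⟩ * tH n ⟨i + 1, h⟩ * tH n ⟨i, Nat.lt_of_succ_lt h⟩) :=
              mul_neg (tH n ⟨i, Nat.lt_of_succ_lt h⟩ * tH n ⟨i + 1, h⟩)
                (tH n ⟨i, Nat.lt_of_succ_lt h⟩)
          _ = -(tH n ⟨i + 1, h⟩ * tH n ⟨i, Nat.lt_of_succ_lt h⟩ * tH n ⟨i + 1, h⟩) :=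
              neg_inj.mpr (rel_braid n i h)
          _ = (tH n ⟨i + 1, h⟩ * tH n ⟨i, Nat.lt_of_succ_lt h⟩) * -tH n ⟨i + 1, h⟩ :=
              (mul_neg (tH n ⟨i + 1, h⟩ * tH n ⟨i, Nat.lt_of_succ_lt h⟩)
                (tH n ⟨i + 1, h⟩)).symm
          _ = -tH n ⟨i + 1, h⟩ * -tH n ⟨i, Nat.lt_of_succ_lt h⟩ * -tH n ⟨i + 1, h⟩ :=
              congrArg (· * -tH n ⟨i + 1, h⟩)
                (neg_mul_neg (tH n ⟨i + 1, h⟩) (tH n ⟨i, Nat.lt_of_succ_lt h⟩)).symm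
    | tt i j hij =>
        simp only [map_mul, map_neg, map_one, T, FreeAlgebra.lift_ι_apply]
        calc (-tH n i * -tH n j) * (-tH n i * -tH n j)
            = (tH n i * tH n j) * (-tH n i * -tH n j) :=
              congrArg (· * (-tH n i * -tH n j)) (neg_mul_neg (tH n i) (tH n j))
          _ = (tH n i * tH n j) * (tH n i * tH n j) :=
              congrArg ((tH n i * tH n j) * ·) (neg_mul_neg (tH n i) (tH n j))
          _ = -1 := rel_tt n i j hij
    | bb i j hij =>
        simp only [map_mul, map_neg, B, FreeAlgebra.lift_ι_apply]
        calc -bH n i * -bH n j = bH n i * bH n j := neg_mul_neg (bH n i) (bH n j)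
          _ = -(bH n j * bH n i) := rel_bb n i j hij
          _ = -(-bH n j * -bH n i) := neg_inj.mpr (neg_mul_neg (bH n j) (bH n i)).symm
    | bt i h =>
        simp only [map_mul, map_add, map_one, map_neg, T, B, FreeAlgebra.lift_ι_apply]
        calc -bH n ⟨i + 1, h⟩ * -tH n ⟨i, by omega⟩ + -tH n ⟨i, by omega⟩ *
              -bH n ⟨i, Nat.lt_of_succ_lt h⟩
            = bH n ⟨i + 1, h⟩ * tH n ⟨i, by omega⟩ + tH n ⟨i, by omega⟩ *
              bH n ⟨i, Nat.lt_of_succ_lt h⟩ :=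
              congrArg₂ (· + ·) (neg_mul_neg (bH n ⟨i + 1, h⟩) (tH n ⟨i, by omega⟩))
                (neg_mul_neg (tH n ⟨i, by omega⟩) (bH n ⟨i, Nat.lt_of_succ_lt h⟩))
          _ = 1 := rel_bt n i h
    | tb j i h1 h2 =>
        simp only [map_mul, map_add, map_neg, map_zero, T, B, FreeAlgebra.lift_ι_apply]
        calc -tH n j * -bH n i + -bH n i * -tH n j
            = tH n j * bH n i + bH n i * tH n j :=
              congrArg₂ (· + ·) (neg_mul_neg (tH n j) (bH n i))
                (neg_mul_neg (bH n i) (tH n j))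
          _ = 0 := rel_tb n j i h1 h2⟩

/-- The even part of the superalgebra `HS n`. -/
noncomputable def evenPartS (n : ℕ) : Submodule ℂ (HS n) :=
  LinearMap.eqLocus (thetaS n).toLinearMap LinearMap.id

/-- The even cocenter of `HS n`. -/
noncomputable def evenCocenterS (n : ℕ) : Submodule ℂ (HS n ⧸ commSpan (HS n)) :=
  (evenPartS n).map (commSpan (HS n)).mkQ

end SAHA
namespace SAHA

/-- The parts of a composition `γ`, sorted in decreasing order. -/
def sortDescL (γ : List ℕ) : List ℕ := ((γ : Multiset ℕ).sort (· ≤ ·)).reverse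

variable (n : ℕ)

lemma mem_commSpan_sub_mul (a b : HS n) : a * b - b * a ∈ commSpan (HS n) :=
  Submodule.subset_span ⟨a, b, rfl⟩

lemma commSpan_conj (w w' z : HS n) (h : w * w' = 1) :
    z - w' * (z * w) ∈ commSpan (HS n) := by
  have h1 : (z * w) * w' = z := by rw [mul_assoc, h, mul_one]
  have := mem_commSpan_sub_mul n (z * w) w'
  rwa [h1] at this

lemma tN_sq (k : ℕ) : tN n k * tN n k = 1 := by
  unfold tN
  split
  · exact rel_tsq n _
  · rw [one_mul]

lemma tN_eq_tH {k : ℕ} (h : k < n - 1) : tN n k = tH n ⟨k, h⟩ := by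
  unfold tN; rw [dif_pos h]

lemma tN_braid {i : ℕ} (h : i + 1 < n - 1) :
    tN n i * tN n (i + 1) * tN n i = tN n (i + 1) * tN n i * tN n (i + 1) := by
  rw [tN_eq_tH n h, tN_eq_tH n (Nat.lt_of_succ_lt h)]
  exact rel_braid n i h

lemma tN_anticomm {i j : ℕ} (hij : i + 1 < j) (hj : j < n - 1) :
    tN n i * tN n j = -(tN n j * tN n i) := by
  have hi : i < n - 1 := by omega
  rw [tN_eq_tH n hi, tN_eq_tH n hj]
  set x := tH n ⟨i, hi⟩ with hx
  set y := tH n ⟨j, hj⟩ with hy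
  have hxx : x * x = 1 := rel_tsq n _
  have hyy : y * y = 1 := rel_tsq n _
  have h4 : (x * y) * (x * y) = -1 := rel_tt n _ _ (Or.inl hij)
  have key : y * x = -(x * y) := by
    have e1 : x * ((x * y) * (x * y)) * y = (x * x) * ((y * x) * (y * y)) := by
      noncomm_ring
    have e3 : (x * x) * ((y * x) * (y * y)) = -(x * y) := by
      rw [← e1, h4]
      rw [show x * (-1 : HS n) * y = -(x * y) by
        rw [mul_neg_one (a := x), neg_mul]]
    rwa [hxx, hyy, one_mul, mul_one] at e3
  rw [key, neg_neg]

/-- `Far i j`: generators `t_i, t_j` anticommute. -/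
def Far (i j : ℕ) : Prop := (i + 1 < j ∧ j < n - 1) ∨ (j + 1 < i ∧ i < n - 1)

lemma tN_far_anticomm {i j : ℕ} (h : Far n i j) :
    tN n i * tN n j = -(tN n j * tN n i) := by
  rcases h with ⟨h1, h2⟩ | ⟨h1, h2⟩
  · exact tN_anticomm n h1 h2
  · rw [tN_anticomm n h1 h2, neg_neg]

variable (n : ℕ)

-- locally restated algebra lemmas so that `rw` keyed matching works on `HS n`
lemma negmul (a b : HS n) : -a * b = -(a * b) := neg_mul a b
lemma mulneg (a b : HS n) : a * -b = -(a * b) := mul_neg a b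
lemma smulneg (c : ℂ) (a : HS n) : c • -a = -(c • a) := smul_neg c a
lemma negsmul (c : ℂ) (a : HS n) : (-c) • a = -(c • a) := neg_smul c a
lemma negOneSmul (a : HS n) : (-1 : ℂ) • a = -a := neg_one_smul ℂ a
lemma mulsmul (c : ℂ) (a b : HS n) : a * (c • b) = c • (a * b) := mul_smul_comm c a b
lemma smulmul (c : ℂ) (a b : HS n) : (c • a) * b = c • (a * b) := smul_mul_assoc c a b
lemma negneg (a : HS n) : -(-a) = a := neg_neg a
lemma smulsmul (c d : ℂ) (a : HS n) : c • d • a = (c * d) • a := smul_smul c d a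

/-- Product of generators indexed by a word. -/
noncomputable def Pw (l : List ℕ) : HS n := (l.map (tN n)).prod

@[simp] lemma Pw_nil : Pw n [] = 1 := rfl

lemma Pw_cons (i : ℕ) (l : List ℕ) : Pw n (i :: l) = tN n i * Pw n l := by
  simp [Pw]

lemma Pw_append (l₁ l₂ : List ℕ) : Pw n (l₁ ++ l₂) = Pw n l₁ * Pw n l₂ := by
  simp [Pw]

@[simp] lemma Pw_singleton (i : ℕ) : Pw n [i] = tN n i := by simp [Pw]

lemma Pw_mul_reverse (l : List ℕ) : Pw n l * Pw n l.reverse = 1 := by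
  induction l with
  | nil => simp
  | cons i l ih =>
      rw [List.reverse_cons, Pw_cons, Pw_append, Pw_singleton, mul_assoc,
        ← mul_assoc (Pw n l), ih, one_mul, tN_sq]

lemma Pw_reverse_mul (l : List ℕ) : Pw n l.reverse * Pw n l = 1 := by
  have := Pw_mul_reverse n l.reverse
  rwa [List.reverse_reverse] at this

/-- Equality up to sign. -/
def PMr (x y : HS n) : Prop := x = y ∨ x = -y

lemma PMr.refl (x : HS n) : PMr n x x := Or.inl rfl

lemma PMr.symm {x y : HS n} (h : PMr n x y) : PMr n y x := by
  rcases h with h | h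
  · exact Or.inl h.symm
  · exact Or.inr (by rw [h, negneg])

lemma PMr.trans {x y z : HS n} (h1 : PMr n x y) (h2 : PMr n y z) : PMr n x z := by
  rcases h1 with h1 | h1 <;> rcases h2 with h2 | h2
  · exact Or.inl (h1.trans h2)
  · exact Or.inr (h1.trans h2)
  · exact Or.inr (by rw [h1, h2])
  · exact Or.inl (by rw [h1, h2, negneg])

lemma PMr.of_eq {x y : HS n} (h : x = y) : PMr n x y := Or.inl h

lemma PMr.mul_left {x y : HS n} (z : HS n) (h : PMr n x y) : PMr n (z * x) (z * y) := by
  rcases h with h | h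
  · exact Or.inl (by rw [h])
  · exact Or.inr (by rw [h, mulneg])

lemma PMr.mul_right {x y : HS n} (z : HS n) (h : PMr n x y) : PMr n (x * z) (y * z) := by
  rcases h with h | h
  · exact Or.inl (by rw [h])
  · exact Or.inr (by rw [h, negmul])

lemma PMr.of_sign (e : ℕ) {x y : HS n} (h : x = ((-1 : ℂ) ^ e) • y) : PMr n x y := by
  rcases Nat.even_or_odd e with he | he
  · exact Or.inl (by rw [h, he.neg_one_pow, one_smul])
  · exact Or.inr (by rw [h, he.neg_one_pow, negOneSmul])

lemma far_single (l : List ℕ) (j : ℕ) (h : ∀ i ∈ l, Far n i j) :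
    Pw n l * tN n j = ((-1 : ℂ) ^ l.length) • (tN n j * Pw n l) := by
  induction l with
  | nil => simp
  | cons i l ih =>
      have hf : Far n i j := h i (List.mem_cons_self (a := i) (l := l))
      rw [Pw_cons, mul_assoc, ih (fun i hi => h i (List.mem_cons_of_mem _ hi)),
        mulsmul, ← mul_assoc, tN_far_anticomm n hf, negmul, smulneg,
        List.length_cons, pow_succ, ← negsmul, mul_assoc]
      congr 1
      ring

lemma far_blocks (l₁ l₂ : List ℕ) (h : ∀ i ∈ l₁, ∀ j ∈ l₂, Far n i j) :
    Pw n l₁ * Pw n l₂ = ((-1 : ℂ) ^ (l₁.length * l₂.length)) • (Pw n l₂ * Pw n l₁) := by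
  induction l₂ with
  | nil => simp
  | cons j l₂ ih =>
      rw [Pw_cons, ← mul_assoc, far_single n l₁ j (fun i hi => h i hi j (List.mem_cons_self (a := j) (l := l₂))),
        smulmul, mul_assoc, ih (fun i hi j' hj' => h i hi j' (List.mem_cons_of_mem _ hj')),
        mulsmul, smulsmul, ← pow_add, ← mul_assoc, ← Pw_cons]
      congr 2
      rw [List.length_cons]
      ring

lemma far_single_comm (l : List ℕ) (j : ℕ) (h : ∀ i ∈ l, Far n i j)
    (he : Even l.length) : Pw n l * tN n j = tN n j * Pw n l := by
  rw [far_single n l j h, he.neg_one_pow, one_smul]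

lemma far_blocks_comm (l₁ l₂ : List ℕ) (h : ∀ i ∈ l₁, ∀ j ∈ l₂, Far n i j)
    (he : Even l₁.length) : Pw n l₁ * Pw n l₂ = Pw n l₂ * Pw n l₁ := by
  rw [far_blocks n l₁ l₂ h, (he.mul_right _).neg_one_pow, one_smul]

lemma far_blocks_anticomm (l₁ l₂ : List ℕ) (h : ∀ i ∈ l₁, ∀ j ∈ l₂, Far n i j)
    (h1 : Odd l₁.length) (h2 : Odd l₂.length) :
    Pw n l₁ * Pw n l₂ = -(Pw n l₂ * Pw n l₁) := by
  rw [far_blocks n l₁ l₂ h, (h1.mul h2).neg_one_pow, negOneSmul]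

variable (n : ℕ)

lemma range'_two (r : ℕ) : List.range' r 2 = [r, r + 1] := rfl

lemma mem_range'_far_right {r c j : ℕ} (hc : r + c ≤ n - 1) (hj : j + 1 < r) :
    ∀ i ∈ List.range' r c, Far n i j := by
  intro i hi
  rw [List.mem_range'_1] at hi
  exact Or.inr ⟨by omega, by omega⟩

lemma mem_range'_far_left {s c j : ℕ} (hj : s + c < j) (hjn : j < n - 1) :
    ∀ i ∈ List.range' s c, Far n i j := by
  intro i hi
  rw [List.mem_range'_1] at hi
  exact Or.inl ⟨by omega, hjn⟩

/-- Sliding a single generator up through a cycle word. -/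
lemma slide_up (s k r : ℕ) (hsr : s ≤ r) (hr : r + 2 ≤ s + k) (hn : s + k ≤ n - 1) :
    PMr n (Pw n (List.range' s k) * tN n r) (tN n (r + 1) * Pw n (List.range' s k)) := by
  set c := s + k - (r + 2) with hc
  have hsplit : List.range' s k = List.range' s (r - s) ++ ([r, r + 1] ++ List.range' (r + 2) c) := by
    rw [← range'_two, List.range'_append_1 (s := r) (m := 2) (n := c)]
    calc List.range' s k = List.range' s ((r - s) + (c + 2)) := by congr 1; omega
      _ = List.range' s (r - s) ++ List.range' (s + (r - s)) (c + 2) :=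
          (List.range'_append_1 (s := s) (m := r - s) (n := c + 2)).symm
      _ = List.range' s (r - s) ++ List.range' r (2 + c) := by congr 2 <;> omega
  set A := Pw n (List.range' s (r - s)) with hA
  set Bl := Pw n (List.range' (r + 2) c) with hB
  have hPw : Pw n (List.range' s k) = A * (tN n r * (tN n (r + 1) * Bl)) := by
    rw [hsplit, Pw_append, Pw_append, Pw_cons, Pw_cons, Pw_nil, mul_one, mul_assoc]
  have hBr : Bl * tN n r = ((-1 : ℂ) ^ c) • (tN n r * Bl) := by
    have := far_single n (List.range' (r + 2) c) r
      (mem_range'_far_right n (by omega) (by omega))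
    simpa using this
  have hAr : A * tN n (r + 1) = ((-1 : ℂ) ^ (r - s)) • (tN n (r + 1) * A) := by
    have := far_single n (List.range' s (r - s)) (r + 1)
      (mem_range'_far_left n (by omega) (by omega))
    simpa using this
  have hbraid : tN n r * tN n (r + 1) * tN n r = tN n (r + 1) * tN n r * tN n (r + 1) :=
    tN_braid n (by omega)
  have main : Pw n (List.range' s k) * tN n r
      = ((-1 : ℂ) ^ (c + (r - s))) • (tN n (r + 1) * Pw n (List.range' s k)) := by
    calc Pw n (List.range' s k) * tN n r
        = A * (tN n r * (tN n (r + 1) * (Bl * tN n r))) := by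
          rw [hPw, mul_assoc, mul_assoc, mul_assoc]
      _ = ((-1 : ℂ) ^ c) • (A * (tN n r * tN n (r + 1) * tN n r * Bl)) := by
          rw [hBr, mulsmul, mulsmul, mulsmul]
          congr 1
          simp only [mul_assoc]
      _ = ((-1 : ℂ) ^ c) • ((A * tN n (r + 1)) * (tN n r * (tN n (r + 1) * Bl))) := by
          rw [hbraid]
          congr 1
          simp only [mul_assoc]
      _ = ((-1 : ℂ) ^ (c + (r - s))) • (tN n (r + 1) * Pw n (List.range' s k)) := by
          rw [hAr, smulmul, smulsmul, ← pow_add, hPw, mul_assoc]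
  exact PMr.of_sign n _ main

/-- Sliding an interval word up through a cycle word. -/
lemma slide_up_block (s k : ℕ) (hn : s + k ≤ n - 1) : ∀ (c j : ℕ), s ≤ j → j + c + 1 ≤ s + k →
    PMr n (Pw n (List.range' s k) * Pw n (List.range' j c))
      (Pw n (List.range' (j + 1) c) * Pw n (List.range' s k)) := by
  intro c
  induction c with
  | zero => intro j _ _; exact PMr.of_eq n (by simp)
  | succ c ih =>
      intro j hj hjc
      have h1 : PMr n (Pw n (List.range' s k) * tN n j) (tN n (j + 1) * Pw n (List.range' s k)) :=
        slide_up n s k j hj (by omega) hn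
      have e1 : Pw n (List.range' s k) * Pw n (List.range' j (c + 1))
          = (Pw n (List.range' s k) * tN n j) * Pw n (List.range' (j + 1) c) := by
        rw [List.range'_succ, Pw_cons, mul_assoc]
      have h2 := PMr.mul_right n (Pw n (List.range' (j + 1) c)) h1
      have h3 := PMr.mul_left n (tN n (j + 1)) (ih (j + 1) (by omega) (by omega))
      have e2 : (tN n (j + 1) * Pw n (List.range' s k)) * Pw n (List.range' (j + 1) c)
          = tN n (j + 1) * (Pw n (List.range' s k) * Pw n (List.range' (j + 1) c)) :=
        mul_assoc _ _ _
      have e3 : tN n (j + 1) * (Pw n (List.range' (j + 2) c) * Pw n (List.range' s k))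
          = Pw n (List.range' (j + 1) (c + 1)) * Pw n (List.range' s k) := by
        rw [List.range'_succ, Pw_cons, mul_assoc]
      exact PMr.trans n (PMr.of_eq n e1)
        (PMr.trans n h2 (PMr.trans n (PMr.of_eq n e2) (PMr.trans n h3 (PMr.of_eq n e3))))

/-- Absorbing the top generator: `C_m t_{top} = C_{m-1}`. -/
lemma absorb_top (s k : ℕ) :
    Pw n (List.range' s (k + 1)) * tN n (s + k) = Pw n (List.range' s k) := by
  rw [List.range'_1_concat, Pw_append, Pw_singleton, mul_assoc, tN_sq, mul_one]

/-- Absorbing the bottom generator: `t_s C_m = D`. -/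
lemma absorb_bot (s k : ℕ) :
    tN n s * Pw n (List.range' s (k + 1)) = Pw n (List.range' (s + 1) k) := by
  rw [List.range'_succ, Pw_cons, ← mul_assoc, tN_sq, one_mul]

variable (n : ℕ)

section Master

variable (s α β : ℕ)

/-- The long-cycle word on the region. -/
noncomputable def Cyc : HS n := Pw n (List.range' s (α + β + 1))
/-- The long-cycle word, one shorter. -/
noncomputable def Cyc' : HS n := Pw n (List.range' s (α + β))
/-- The shifted cycle word. -/
noncomputable def Dw : HS n := Pw n (List.range' (s + 1) (α + β))
/-- Intermediate two-block configuration. -/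
noncomputable def Yw (j e : ℕ) : HS n :=
  Pw n (List.range' (s + j) α) * Pw n (List.range' (s + j + α + 1) e)

variable (hmn : s + α + β + 2 ≤ n)

include hmn

lemma peel (j f : ℕ) (hjf : j + f + 1 = β) :
    PMr n (Cyc n s α β * Yw n s α j (f + 1)) (Yw n s α (j + 1) f * Cyc' n s α β) := by
  have htop : List.range' (s + j + α + 1) (f + 1)
      = List.range' (s + j + α + 1) f ++ [s + (α + β)] := by
    rw [List.range'_1_concat]
    congr 2
    omega
  have e1 : Cyc n s α β * Yw n s α j (f + 1)
      = ((Cyc n s α β * Pw n (List.range' (s + j) α)) * Pw n (List.range' (s + j + α + 1) f))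
          * tN n (s + (α + β)) := by
    simp only [Yw]
    rw [htop, Pw_append, Pw_singleton]
    simp only [mul_assoc]
  have h1 : PMr n (Cyc n s α β * Pw n (List.range' (s + j) α))
      (Pw n (List.range' (s + j + 1) α) * Cyc n s α β) :=
    slide_up_block n s (α + β + 1) (by omega) α (s + j) (by omega) (by omega)
  have h2 : PMr n (Cyc n s α β * Pw n (List.range' (s + j + α + 1) f))
      (Pw n (List.range' (s + j + α + 2) f) * Cyc n s α β) :=
    slide_up_block n s (α + β + 1) (by omega) f (s + j + α + 1) (by omega) (by omega)
  have habs : Cyc n s α β * tN n (s + (α + β)) = Cyc' n s α β := absorb_top n s (α + β)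
  have step1 : PMr n (Cyc n s α β * Yw n s α j (f + 1))
      ((Pw n (List.range' (s + j + 1) α) * (Cyc n s α β *
        Pw n (List.range' (s + j + α + 1) f))) * tN n (s + (α + β))) := by
    rw [e1]
    have := PMr.mul_right n (tN n (s + (α + β)))
      (PMr.mul_right n (Pw n (List.range' (s + j + α + 1) f)) h1)
    exact PMr.trans n this (PMr.of_eq n (by simp only [mul_assoc]))
  have step2 : PMr n ((Pw n (List.range' (s + j + 1) α) * (Cyc n s α β *
        Pw n (List.range' (s + j + α + 1) f))) * tN n (s + (α + β)))
      (Yw n s α (j + 1) f * Cyc' n s α β) := by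
    have h2' := PMr.mul_right n (tN n (s + (α + β)))
      (PMr.mul_left n (Pw n (List.range' (s + j + 1) α)) h2)
    refine PMr.trans n h2' (PMr.of_eq n ?_)
    simp only [Yw]
    have e3 : List.range' (s + (j + 1)) α = List.range' (s + j + 1) α := by congr 1
    have e4 : List.range' (s + (j + 1) + α + 1) f = List.range' (s + j + α + 2) f := by
      congr 1
      omega
    rw [e3, e4]
    simp only [mul_assoc]
    rw [habs]
  exact PMr.trans n step1 step2

lemma loopM1 : ∀ j f, j + f = β →
    PMr n (Cyc n s α β ^ j * Yw n s α 0 β) (Yw n s α j f * Cyc' n s α β ^ j) := by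
  intro j
  induction j with
  | zero =>
      intro f hf
      subst hf
      simp only [pow_zero, one_mul, mul_one, Nat.zero_add]
      exact PMr.refl n _
  | succ j ih =>
      intro f hf
      have h1 := ih (f + 1) (by omega)
      have h2 := peel n s α β hmn j f (by omega)
      refine PMr.trans n (PMr.of_eq n (by rw [pow_succ', mul_assoc])) ?_
      refine PMr.trans n (PMr.mul_left n (Cyc n s α β) h1) ?_
      refine PMr.trans n (PMr.of_eq n (by rw [← mul_assoc])) ?_
      refine PMr.trans n (PMr.mul_right n (Cyc' n s α β ^ j) h2) ?_
      exact PMr.of_eq n (by rw [pow_succ' (Cyc' n s α β), mul_assoc])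

lemma masterM1 :
    PMr n (Cyc n s α β ^ (β + 1) * Yw n s α 0 β)
      (Pw n (List.range' (s + β + 1) α) * (Cyc n s α β * Cyc' n s α β ^ β)) := by
  have h1 := loopM1 n s α β hmn β 0 rfl
  have h2 : PMr n (Cyc n s α β * Pw n (List.range' (s + β) α))
      (Pw n (List.range' (s + β + 1) α) * Cyc n s α β) :=
    slide_up_block n s (α + β + 1) (by omega) α (s + β) (by omega) (by omega)
  have e1 : Yw n s α β 0 = Pw n (List.range' (s + β) α) := by
    simp only [Yw]
    rw [show List.range' (s + β + α + 1) 0 = [] from rfl, Pw_nil, mul_one]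
  refine PMr.trans n (PMr.of_eq n (by rw [pow_succ', mul_assoc])) ?_
  refine PMr.trans n (PMr.mul_left n (Cyc n s α β) h1) ?_
  refine PMr.trans n (PMr.of_eq n (by rw [e1, ← mul_assoc])) ?_
  refine PMr.trans n (PMr.mul_right n (Cyc' n s α β ^ β) h2) ?_
  exact PMr.of_eq n (by rw [mul_assoc])

lemma masterM2 : ∀ d, PMr n (Cyc n s α β * Cyc' n s α β ^ d)
    (Dw n s α β ^ d * Cyc n s α β) := by
  intro d
  induction d with
  | zero =>
      simp only [pow_zero, mul_one, one_mul]
      exact PMr.refl n _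
  | succ d ih =>
      have hbase : PMr n (Cyc n s α β * Cyc' n s α β)
          (Dw n s α β * Cyc n s α β) :=
        slide_up_block n s (α + β + 1) (by omega) (α + β) s (le_refl s) (by omega)
      refine PMr.trans n (PMr.of_eq n (by rw [pow_succ' (Cyc' n s α β), ← mul_assoc])) ?_
      refine PMr.trans n (PMr.mul_right n (Cyc' n s α β ^ d) hbase) ?_
      refine PMr.trans n (PMr.of_eq n (by rw [mul_assoc])) ?_
      refine PMr.trans n (PMr.mul_left n (Dw n s α β) ih) ?_
      exact PMr.of_eq n (by rw [pow_succ' (Dw n s α β), mul_assoc])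

lemma slideDownPow : ∀ d, d ≤ α + β →
    PMr n (tN n (s + d) * Cyc n s α β ^ d) (Cyc n s α β ^ d * tN n s) := by
  intro d
  induction d with
  | zero =>
      intro _
      simp only [pow_zero, mul_one, one_mul, Nat.add_zero]
      exact PMr.refl n _
  | succ d ih =>
      intro hd
      have hs : PMr n (tN n (s + (d + 1)) * Cyc n s α β)
          (Cyc n s α β * tN n (s + d)) :=
        PMr.symm n (slide_up n s (α + β + 1) (s + d) (by omega) (by omega) (by omega))
      refine PMr.trans n (PMr.of_eq n (by rw [pow_succ' (Cyc n s α β), ← mul_assoc])) ?_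
      refine PMr.trans n (PMr.mul_right n (Cyc n s α β ^ d) hs) ?_
      refine PMr.trans n (PMr.of_eq n (by rw [mul_assoc])) ?_
      refine PMr.trans n (PMr.mul_left n (Cyc n s α β) (ih (by omega))) ?_
      exact PMr.of_eq n (by rw [pow_succ' (Cyc n s α β), mul_assoc])

lemma masterM3 : ∀ d, d ≤ α + β →
    PMr n (Pw n (List.range' s d) * Cyc n s α β ^ d) (Dw n s α β ^ d) := by
  intro d
  induction d with
  | zero =>
      intro _
      simp only [pow_zero]
      rw [show List.range' s 0 = [] from rfl, Pw_nil, one_mul]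
      exact PMr.refl n _
  | succ d ih =>
      intro hd
      have e1 : Pw n (List.range' s (d + 1)) * Cyc n s α β ^ (d + 1)
          = Pw n (List.range' s d) * (tN n (s + d) * Cyc n s α β ^ d) * Cyc n s α β := by
        rw [List.range'_1_concat, Pw_append, Pw_singleton, pow_succ]
        noncomm_ring
      refine PMr.trans n (PMr.of_eq n e1) ?_
      refine PMr.trans n (PMr.mul_right n (Cyc n s α β)
        (PMr.mul_left n (Pw n (List.range' s d)) (slideDownPow n s α β hmn d (by omega)))) ?_
      have e2 : Pw n (List.range' s d) * (Cyc n s α β ^ d * tN n s) * Cyc n s α β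
          = (Pw n (List.range' s d) * Cyc n s α β ^ d) * (tN n s * Cyc n s α β) := by
        simp only [mul_assoc]
      refine PMr.trans n (PMr.of_eq n e2) ?_
      have habs : tN n s * Cyc n s α β = Dw n s α β := absorb_bot n s (α + β)
      rw [habs]
      refine PMr.trans n (PMr.mul_right n (Dw n s α β) (ih (by omega))) ?_
      exact PMr.of_eq n (pow_succ (Dw n s α β) d).symm

lemma masterKey :
    PMr n (Cyc n s α β ^ (β + 1) * (Pw n (List.range' s α) * Pw n (List.range' (s + α + 1) β)))
      ((Pw n (List.range' s β) * Pw n (List.range' (s + β + 1) α)) * Cyc n s α β ^ (β + 1)) := by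
  have e0 : Yw n s α 0 β = Pw n (List.range' s α) * Pw n (List.range' (s + α + 1) β) := by
    simp only [Yw, Nat.add_zero]
  have hfar : ∀ i ∈ List.range' (s + β + 1) α, ∀ j ∈ List.range' s β, Far n i j := by
    intro i hi j hj
    rw [List.mem_range'_1] at hi hj
    exact Or.inr ⟨by omega, by omega⟩
  have hswap : PMr n (Pw n (List.range' (s + β + 1) α) * Pw n (List.range' s β))
      (Pw n (List.range' s β) * Pw n (List.range' (s + β + 1) α)) :=
    PMr.of_sign n _ (far_blocks n _ _ hfar)
  refine PMr.trans n (PMr.of_eq n (by rw [← e0])) ?_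
  refine PMr.trans n (masterM1 n s α β hmn) ?_
  refine PMr.trans n (PMr.mul_left n (Pw n (List.range' (s + β + 1) α))
    (masterM2 n s α β hmn β)) ?_
  have h3 := PMr.symm n (masterM3 n s α β hmn β (by omega))
  refine PMr.trans n (PMr.mul_left n (Pw n (List.range' (s + β + 1) α))
    (PMr.mul_right n (Cyc n s α β) h3)) ?_
  have e4 : Pw n (List.range' (s + β + 1) α) *
      ((Pw n (List.range' s β) * Cyc n s α β ^ β) * Cyc n s α β)
      = (Pw n (List.range' (s + β + 1) α) * Pw n (List.range' s β)) * Cyc n s α β ^ (β + 1) := by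
    rw [pow_succ]
    simp only [mul_assoc]
  refine PMr.trans n (PMr.of_eq n e4) ?_
  exact PMr.mul_right n (Cyc n s α β ^ (β + 1)) hswap

end Master

variable (n : ℕ)

/-- Equivalence modulo commutators, up to sign. -/
def Req (x y : HS n) : Prop :=
  x - y ∈ commSpan (HS n) ∨ x + y ∈ commSpan (HS n)

lemma Req.refl (x : HS n) : Req n x x := Or.inl (by rw [sub_self]; exact zero_mem _)

lemma Req.trans {x y z : HS n} (h1 : Req n x y) (h2 : Req n y z) : Req n x z := by
  rcases h1 with h1 | h1 <;> rcases h2 with h2 | h2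
  · exact Or.inl (by have := add_mem h1 h2; rwa [sub_add_sub_cancel] at this)
  · refine Or.inr ?_
    have h3 := add_mem h1 h2
    have e : x - y + (y + z) = x + z := by abel
    rwa [e] at h3
  · refine Or.inr ?_
    have h3 := sub_mem h1 h2
    have e : x + y - (y - z) = x + z := by abel
    rwa [e] at h3
  · refine Or.inl ?_
    have h3 := sub_mem h1 h2
    have e : x + y - (y + z) = x - z := by abel
    rwa [e] at h3

lemma Pw_comm (l : List ℕ) (y : HS n) (h : ∀ i ∈ l, tN n i * y = y * tN n i) :
    Pw n l * y = y * Pw n l := by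
  induction l with
  | nil => simp
  | cons i l ih =>
      rw [Pw_cons, mul_assoc, ih (fun j hj => h j (List.mem_cons_of_mem _ hj)),
        ← mul_assoc, h i (List.mem_cons_self (a := i) (l := l)), mul_assoc]

lemma mul_pow_cancel (u v : HS n) (hu : u * v = 1) (k : ℕ) : u ^ k * v ^ k = 1 := by
  induction k with
  | zero => simp
  | succ k ih =>
      rw [pow_succ' u, pow_succ v, mul_assoc, ← mul_assoc (u ^ k), ih, one_mul, hu]

/-- Swapping two adjacent blocks (sizes `α+1`, `β+1`) in the presence of a
spectator `y` commuting with the region. -/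
lemma swap_spectator (s α β : ℕ) (hmn : s + α + β + 2 ≤ n) (y : HS n)
    (hy : ∀ i, s ≤ i → i ≤ s + α + β → tN n i * y = y * tN n i) :
    Req n ((Pw n (List.range' s α) * Pw n (List.range' (s + α + 1) β)) * y)
      ((Pw n (List.range' s β) * Pw n (List.range' (s + β + 1) α)) * y) := by
  set X := Pw n (List.range' s α) * Pw n (List.range' (s + α + 1) β) with hX
  set X' := Pw n (List.range' s β) * Pw n (List.range' (s + β + 1) α) with hX'
  set C := Cyc n s α β with hC
  set Crev := Pw n ((List.range' s (α + β + 1)).reverse) with hCrev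
  have hCC : C * Crev = 1 := Pw_mul_reverse n _
  have hCC' : Crev * C = 1 := Pw_reverse_mul n _
  set w := C ^ (β + 1) with hw
  set winv := Crev ^ (β + 1) with hwinv
  have hww : w * winv = 1 := mul_pow_cancel n C Crev hCC (β + 1)
  have hww' : winv * w = 1 := mul_pow_cancel n Crev C hCC' (β + 1)
  have hyC : C * y = y * C := by
    apply Pw_comm
    intro i hi
    rw [List.mem_range'_1] at hi
    exact hy i (by omega) (by omega)
  have hyw : w * y = y * w := by
    have : Commute C y := hyC
    exact (this.pow_left (β + 1)).eq
  have hmaster := masterKey n s α β hmn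
  have key : ∀ Z : HS n, Z - winv * (Z * w) ∈ commSpan (HS n) := by
    intro Z
    exact commSpan_conj n w winv Z hww
  have hXy : ∀ V : HS n, w * V = X' * w → (X * y) - winv * (((X' * y)) * w) = 0 → True := fun _ _ _ => trivial
  rcases hmaster with hEq | hEq
  · -- w * X = X' * w
    left
    have e1 : X * y = winv * ((X' * y) * w) := by
      have : X * y = winv * (w * (X * y)) := by
        rw [← mul_assoc, hww', one_mul]
      rw [this, ← mul_assoc w, hEq]
      congr 1
      rw [mul_assoc, hyw, ← mul_assoc]
    rw [e1]
    have := key (X' * y)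
    have h2 := neg_mem this
    rwa [neg_sub] at h2
  · -- w * X = -(X' * w)
    right
    have e1 : X * y = -(winv * ((X' * y) * w)) := by
      have h0 : X * y = winv * (w * (X * y)) := by
        rw [← mul_assoc, hww', one_mul]
      rw [h0, ← mul_assoc w, hEq, negmul, mulneg]
      congr 2
      rw [mul_assoc, hyw, ← mul_assoc]
    rw [e1, neg_add_eq_sub]
    exact key (X' * y)

variable (n : ℕ)

/-- The word of a composition, starting at offset `s`. -/
def wordOf : ℕ → List ℕ → List ℕ
  | _, [] => []
  | s, a :: l => List.range' s (a - 1) ++ wordOf (s + a) l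

@[simp] lemma wordOf_nil (s : ℕ) : wordOf s [] = [] := rfl

lemma wordOf_cons (s a : ℕ) (l : List ℕ) :
    wordOf s (a :: l) = List.range' s (a - 1) ++ wordOf (s + a) l := rfl

lemma wordOf_bounds : ∀ (l : List ℕ) (s i : ℕ), i ∈ wordOf s l → s ≤ i ∧ i + 2 ≤ s + l.sum := by
  intro l
  induction l with
  | nil => intro s i h; simp at h
  | cons a l ih =>
      intro s i h
      rw [wordOf_cons, List.mem_append] at h
      rw [List.sum_cons]
      rcases h with h | h
      · rw [List.mem_range'_1] at h
        omega
      · have := ih (s + a) i h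
        omega

lemma wordOf_even : ∀ (l : List ℕ) (s : ℕ), (∀ g ∈ l, Odd g) → Even (wordOf s l).length := by
  intro l
  induction l with
  | nil => intro s _; simp
  | cons a l ih =>
      intro s hodd
      rw [wordOf_cons, List.length_append, List.length_range']
      have ha : Odd a := hodd a (List.mem_cons_self (a := a) (l := l))
      obtain ⟨k, hk⟩ := ha
      have h1 : Even (a - 1) := ⟨k, by omega⟩
      exact h1.add (ih (s + a) (fun g hg => hodd g (List.mem_cons_of_mem _ hg)))

lemma tSeg_Pw (A B : ℕ) : tSeg n A B = Pw n (List.range' A (B - A - 1)) := by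
  simp only [tSeg, Pw, List.range'_eq_map_range, List.map_map]
  rfl

lemma tGamma_word : ∀ (l : List ℕ) (s : ℕ),
    ((List.range l.length).map fun k =>
      tSeg n (s + (l.take k).sum) (s + (l.take (k + 1)).sum)).prod = Pw n (wordOf s l) := by
  intro l
  induction l with
  | nil => intro s; simp
  | cons a l ih =>
      intro s
      rw [List.length_cons, List.range_succ_eq_map, List.map_cons, List.map_map, List.prod_cons]
      have h0 : tSeg n (s + ((a :: l).take 0).sum) (s + ((a :: l).take 1).sum)
          = Pw n (List.range' s (a - 1)) := by
        rw [show ((a :: l).take 0).sum = 0 from rfl, show ((a :: l).take 1).sum = a by simp]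
        rw [tSeg_Pw]
        congr 2
        omega
      have h1 : ((fun k => tSeg n (s + ((a :: l).take k).sum) (s + ((a :: l).take (k + 1)).sum))
            ∘ Nat.succ)
          = fun k => tSeg n ((s + a) + (l.take k).sum) ((s + a) + (l.take (k + 1)).sum) := by
        funext k
        simp only [Function.comp_apply, List.take_succ_cons, List.sum_cons, add_assoc]
      rw [h0, h1, ih (s + a), wordOf_cons, Pw_append]

lemma tGamma_eq_Pw (γ : List ℕ) : tGamma n γ = Pw n (wordOf 0 γ) := by
  have h := tGamma_word n γ 0
  simp only [Nat.zero_add] at h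
  rw [tGamma]
  exact h

lemma permsort {l l' : List ℕ} (hp : l.Perm l') : ∀ (s : ℕ) (y : HS n),
    (∀ g ∈ l, Odd g) → s + l.sum ≤ n →
    (∀ i, s ≤ i → i + 2 ≤ s + l.sum → tN n i * y = y * tN n i) →
    Req n (Pw n (wordOf s l) * y) (Pw n (wordOf s l') * y) := by
  induction hp with
  | nil =>
      intro s y _ _ _
      exact Req.refl n _
  | @cons x l₁ l₂ hp ih =>
      intro s y hodd hsum hy
      have hx : Odd x := hodd x (List.mem_cons_self (a := x) (l := l₁))
      have hx1 : 1 ≤ x := hx.pos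
      set B := Pw n (List.range' s (x - 1)) with hB
      have hBeven : Even (List.range' s (x - 1)).length := by
        rw [List.length_range']
        obtain ⟨k, hk⟩ := hx
        exact ⟨k, by omega⟩
      have hBy : B * y = y * B := by
        apply Pw_comm
        intro i hi
        rw [List.mem_range'_1] at hi
        refine hy i (by omega) (by rw [List.sum_cons]; omega)
      have hs : s + x + l₁.sum ≤ n := by
        have h := hsum
        rw [List.sum_cons] at h
        omega
      have key : ∀ (m : List ℕ), m.sum = l₁.sum →
          B * Pw n (wordOf (s + x) m) = Pw n (wordOf (s + x) m) * B := by
        intro m hm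
        apply far_blocks_comm n _ _ ?_ hBeven
        intro i hi j hj
        rw [List.mem_range'_1] at hi
        obtain ⟨hj1, hj2⟩ := wordOf_bounds m (s + x) j hj
        exact Or.inl ⟨by omega, by omega⟩
      have hyp' : ∀ i, s + x ≤ i → i + 2 ≤ s + x + l₁.sum →
          tN n i * (y * B) = (y * B) * tN n i := by
        intro i h1 h2
        have hyi : tN n i * y = y * tN n i := hy i (by omega) (by rw [List.sum_cons]; omega)
        have hBi : tN n i * B = B * tN n i := by
          refine (far_single_comm n _ i ?_ hBeven).symm
          intro j hj
          rw [List.mem_range'_1] at hj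
          exact Or.inl ⟨by omega, by omega⟩
        rw [← mul_assoc, hyi, mul_assoc, hBi, ← mul_assoc]
      have hreq := ih (s + x) (y * B)
        (fun g hg => hodd g (List.mem_cons_of_mem _ hg)) (by omega) hyp'
      have conv : ∀ (m : List ℕ), m.sum = l₁.sum →
          Pw n (wordOf s (x :: m)) * y = Pw n (wordOf (s + x) m) * (y * B) := by
        intro m hm
        rw [wordOf_cons, Pw_append, key m hm, mul_assoc, hBy]
      rw [conv l₁ rfl, conv l₂ hp.sum_eq.symm]
      exact hreq
  | swap u v m =>
      intro s y hodd hsum hy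
      have hv : Odd v := hodd v (List.mem_cons_self (a := v) (l := u :: m))
      have hu : Odd u := hodd u (List.mem_cons_of_mem _ (List.mem_cons_self (a := u) (l := m)))
      have hv1 : 1 ≤ v := hv.pos
      have hu1 : 1 ≤ u := hu.pos
      have hs : s + v + u + m.sum ≤ n := by
        have h := hsum
        simp only [List.sum_cons] at h
        omega
      set PM := Pw n (wordOf (s + v + u) m) with hPM
      have hPMeven : Even (wordOf (s + v + u) m).length :=
        wordOf_even m _ (fun g hg => hodd g (by simp [hg]))
      set y' := PM * y with hy'
      have hy'' : ∀ i, s ≤ i → i ≤ s + (v - 1) + (u - 1) → tN n i * y' = y' * tN n i := by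
        intro i h1 h2
        have hyi : tN n i * y = y * tN n i := by
          refine hy i h1 ?_
          simp only [List.sum_cons]
          omega
        have hPMi : tN n i * PM = PM * tN n i := by
          refine (far_single_comm n _ i ?_ hPMeven).symm
          intro j hj
          obtain ⟨hj1, hj2⟩ := wordOf_bounds m (s + v + u) j hj
          exact Or.inr ⟨by omega, by omega⟩
        rw [hy', ← mul_assoc, hPMi, mul_assoc, hyi, ← mul_assoc]
      have hswap := swap_spectator n s (v - 1) (u - 1) (by omega) y' hy''
      have convL : Pw n (wordOf s (v :: u :: m)) * y
          = (Pw n (List.range' s (v - 1)) * Pw n (List.range' (s + (v - 1) + 1) (u - 1))) * y' := by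
        rw [wordOf_cons, wordOf_cons, Pw_append, Pw_append]
        have e1 : List.range' (s + (v - 1) + 1) (u - 1) = List.range' (s + v) (u - 1) := by
          congr 1
          omega
        rw [e1, hy', hPM]
        simp only [mul_assoc]
      have convR : Pw n (wordOf s (u :: v :: m)) * y
          = (Pw n (List.range' s (u - 1)) * Pw n (List.range' (s + (u - 1) + 1) (v - 1))) * y' := by
        rw [wordOf_cons, wordOf_cons, Pw_append, Pw_append]
        have e1 : List.range' (s + (u - 1) + 1) (v - 1) = List.range' (s + u) (v - 1) := by
          congr 1
          omega
        have e2 : wordOf (s + u + v) m = wordOf (s + v + u) m := by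
          congr 1
          omega
        rw [e1, e2, hy', hPM]
        simp only [mul_assoc]
      rw [convL, convR]
      exact hswap
  | trans hp₁ hp₂ ih₁ ih₂ =>
      intro s y hodd hsum hy
      refine Req.trans n (ih₁ s y hodd hsum hy) (ih₂ s y ?_ ?_ ?_)
      · intro g hg
        exact hodd g (hp₁.mem_iff.mpr hg)
      · rwa [← hp₁.sum_eq]
      · intro i h1 h2
        exact hy i h1 (by rwa [hp₁.sum_eq])

variable (n : ℕ)

lemma wordOf_append : ∀ (l₁ l₂ : List ℕ) (s : ℕ),
    wordOf s (l₁ ++ l₂) = wordOf s l₁ ++ wordOf (s + l₁.sum) l₂ := by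
  intro l₁
  induction l₁ with
  | nil => intro l₂ s; simp
  | cons a l₁ ih =>
      intro l₂ s
      rw [List.cons_append, wordOf_cons, wordOf_cons, ih, List.append_assoc]
      congr 3
      rw [List.sum_cons]
      omega

lemma wordOf_length : ∀ (l : List ℕ) (s : ℕ), (∀ g ∈ l, 1 ≤ g) →
    (wordOf s l).length + l.length = l.sum := by
  intro l
  induction l with
  | nil => intro s _; simp
  | cons a l ih =>
      intro s hpos
      rw [wordOf_cons, List.length_append, List.length_range', List.length_cons, List.sum_cons]
      have h1 := ih (s + a) (fun g hg => hpos g (List.mem_cons_of_mem _ hg))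
      have h2 : 1 ≤ a := hpos a (List.mem_cons_self (a := a) (l := l))
      omega

lemma even_sum_add_length (l : List ℕ) (h : ∀ a ∈ l, Odd a) : Even (l.sum + l.length) := by
  induction l with
  | nil => simp
  | cons a l ih =>
      rw [List.sum_cons, List.length_cons]
      have ha : Odd a := h a (List.mem_cons_self (a := a) (l := l))
      have hrec := ih (fun g hg => h g (List.mem_cons_of_mem _ hg))
      obtain ⟨k, hk⟩ := ha
      obtain ⟨r, hr⟩ := hrec
      exact ⟨k + r + 1, by omega⟩

lemma split_first_even (γ : List ℕ) (h : ¬ ∀ a ∈ γ, Odd a) :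
    ∃ A e B, γ = A ++ e :: B ∧ (∀ a ∈ A, Odd a) ∧ ¬ Odd e := by
  induction γ with
  | nil => exact absurd (by simp) h
  | cons a γ ih =>
      by_cases ha : Odd a
      · have h' : ¬ ∀ x ∈ γ, Odd x := by
          intro hall
          exact h (by
            intro x hx
            rcases List.mem_cons.mp hx with rfl | hx
            · exact ha
            · exact hall x hx)
        obtain ⟨A, e, B, h1, h2, h3⟩ := ih h'
        refine ⟨a :: A, e, B, by rw [h1, List.cons_append], ?_, h3⟩
        intro x hx
        rcases List.mem_cons.mp hx with rfl | hx
        · exact ha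
        · exact h2 x hx
      · exact ⟨[], a, γ, rfl, by simp, ha⟩

theorem main_reduction (hn : 2 ≤ n)
    (γ : List ℕ) (hpos : ∀ g ∈ γ, 0 < g) (hsum : γ.sum = n)
    (hlen : Even (n - γ.length)) :
    ((¬ ∀ a ∈ γ, Odd a) → tGamma n γ ∈ commSpan (HS n)) ∧
    ((∀ a ∈ γ, Odd a) →
      tGamma n γ - tGamma n (sortDescL γ) ∈ commSpan (HS n) ∨
      tGamma n γ + tGamma n (sortDescL γ) ∈ commSpan (HS n)) := by
  have hpos' : ∀ g ∈ γ, 1 ≤ g := fun g hg => hpos g hg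
  have hwlen : (wordOf 0 γ).length + γ.length = n := by
    rw [wordOf_length γ 0 hpos', hsum]
  constructor
  · -- not all odd
    intro hne
    obtain ⟨A, e, Bb, hγ, hAodd, hEe⟩ := split_first_even γ hne
    have hγ' : γ = (A ++ [e]) ++ Bb := by rw [hγ, List.append_assoc, List.singleton_append]
    set S := (A ++ [e]).sum with hS
    set w₁ := wordOf 0 (A ++ [e]) with hw₁
    set w₂ := wordOf (0 + S) Bb with hw₂
    have hsplit : wordOf 0 γ = w₁ ++ w₂ := by rw [hγ', wordOf_append]
    have hposA : ∀ g ∈ A ++ [e], 1 ≤ g := by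
      intro g hg
      exact hpos' g (by rw [hγ']; exact List.mem_append_left _ hg)
    have hposB : ∀ g ∈ Bb, 1 ≤ g := by
      intro g hg
      exact hpos' g (by rw [hγ']; exact List.mem_append_right _ hg)
    have hl1 : w₁.length + (A ++ [e]).length = S := wordOf_length _ 0 hposA
    have hl2 : w₂.length + Bb.length = Bb.sum := wordOf_length _ _ hposB
    have hsums : S + Bb.sum = n := by
      rw [← hsum, hγ', List.sum_append]
    -- parity bookkeeping
    have hAe : Even (A.sum + A.length) := even_sum_add_length A hAodd
    have hEe' : e % 2 = 0 := by
      rcases Nat.even_or_odd e with h | h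
      · exact Nat.even_iff.mp h
      · exact absurd h hEe
    have hSA : S = A.sum + e := by rw [hS, List.sum_append, List.sum_cons, List.sum_nil, add_zero]
    have hlenAe : (A ++ [e]).length = A.length + 1 := by
      rw [List.length_append, List.length_singleton]
    have hodd1 : Odd w₁.length := by
      rw [Nat.odd_iff]
      obtain ⟨r, hr⟩ := hAe
      omega
    have hwtot : Even ((wordOf 0 γ).length) := by
      have h0 : n - γ.length = (wordOf 0 γ).length := by omega
      rwa [h0] at hlen
    have hodd2 : Odd w₂.length := by
      have hlen12 : (wordOf 0 γ).length = w₁.length + w₂.length := by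
        rw [hsplit, List.length_append]
      rw [Nat.odd_iff]
      rw [Nat.odd_iff] at hodd1
      obtain ⟨r, hr⟩ := hwtot
      omega
    -- anticommutation
    have hfar : ∀ i ∈ w₁, ∀ j ∈ w₂, Far n i j := by
      intro i hi j hj
      obtain ⟨hi1, hi2⟩ := wordOf_bounds (A ++ [e]) 0 i hi
      obtain ⟨hj1, hj2⟩ := wordOf_bounds Bb (0 + S) j hj
      exact Or.inl ⟨by omega, by omega⟩
    have hanti : Pw n w₁ * Pw n w₂ = -(Pw n w₂ * Pw n w₁) :=
      far_blocks_anticomm n w₁ w₂ hfar hodd1 hodd2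
    have hanti' : Pw n w₂ * Pw n w₁ = -(Pw n w₁ * Pw n w₂) := by
      rw [hanti, negneg]
    have hmem := mem_commSpan_sub_mul n (Pw n w₁) (Pw n w₂)
    have e2 : Pw n w₁ * Pw n w₂ - Pw n w₂ * Pw n w₁ = (2 : ℂ) • (Pw n w₁ * Pw n w₂) := by
      rw [hanti', sub_neg_eq_add]
      exact (two_smul ℂ _).symm
    rw [e2] at hmem
    have hmem2 := Submodule.smul_mem (commSpan (HS n)) ((2 : ℂ)⁻¹) hmem
    rw [smul_smul, inv_mul_cancel₀ (two_ne_zero), one_smul] at hmem2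
    rw [tGamma_eq_Pw, hsplit, Pw_append]
    exact hmem2
  · -- all odd
    intro hodd
    have h1 : ((γ : Multiset ℕ).sort (· ≤ ·)).Perm γ := by
      rw [← Multiset.coe_eq_coe, Multiset.sort_eq]
    have h2 : (sortDescL γ).Perm (((γ : Multiset ℕ)).sort (· ≤ ·)) := List.reverse_perm _
    have hperm : γ.Perm (sortDescL γ) := (h2.trans h1).symm
    have hreq := permsort n hperm 0 1 hodd (by omega) (fun i _ _ => by rw [mul_one, one_mul])
    rw [mul_one, mul_one, ← tGamma_eq_Pw, ← tGamma_eq_Pw] at hreq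
    exact hreq

/-- Let `γ` be a composition of `n` with `ℓ(t_γ) = n - k` even and
let `μ` be the corresponding partition.  If `μ ∉ 𝒪𝒫_n` then `t_γ` is a
commutator-combination; if `μ ∈ 𝒪𝒫_n` then `t_γ ≡ ± t_μ` modulo commutators. -/
theorem tGamma_reduction_spin (n : ℕ) (hn : 2 ≤ n)
    (γ : List ℕ) (hpos : ∀ g ∈ γ, 0 < g) (hsum : γ.sum = n)
    (hlen : Even (n - γ.length)) :
    ((¬ ∀ a ∈ γ, Odd a) → tGamma n γ ∈ commSpan (HS n)) ∧
    ((∀ a ∈ γ, Odd a) →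
      tGamma n γ - tGamma n (sortDescL γ) ∈ commSpan (HS n) ∨
      tGamma n γ + tGamma n (sortDescL γ) ∈ commSpan (HS n)) :=
  main_reduction n hn γ hpos hsum hlen

end SAHA
end
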